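/- arXiv:0905.3458 — 4 statements merged into one kernel-verified Lean document; each statement's English description precedes it below -/
import Mathlib

section
/- Let n ≥ 1 be an integer, t > 0 and x, y ∈ ℝ. With the convention x₀ = y and xₙ = x, the (n−1)-fold Gaussian integral (n/(2πt))^{n/2} · ∫_{ℝ^{n−1}} ∏_{j=1}^{n} [ e^{−t·x_j²/(4n)} · e^{−n·(x_j − x_{j−1})²/(2t)} · e^{−t·x_{j−1}²/(4n)} ] dx₁ ⋯ dx_{n−1} (interpreted for n = 1 as the integrand with no integration) equals K_n(t,x,y). -/
noncomputable section
open MeasureTheory Real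

/-- `w_n(t) = sqrt(1 + t²/(4n²))`. -/
def wn (n : ℕ) (t : ℝ) : ℝ := Real.sqrt (1 + t ^ 2 / (4 * (n : ℝ) ^ 2))

/-- `a_n(t) = (1 + (t/n)·w_n(t) + t²/(2n²))^n`. -/
def an (n : ℕ) (t : ℝ) : ℝ := (1 + (t / n) * wn n t + t ^ 2 / (2 * (n : ℝ) ^ 2)) ^ n

/-- `b_n(t) = (1 − (t/n)·w_n(t) + t²/(2n²))^n`. -/
def bn (n : ℕ) (t : ℝ) : ℝ := (1 - (t / n) * wn n t + t ^ 2 / (2 * (n : ℝ) ^ 2)) ^ n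

/-- `a'_n(t) = (1 + (t/n)·w_n(t) + t²/(2n²))^(n-1)`. -/
def an' (n : ℕ) (t : ℝ) : ℝ := (1 + (t / n) * wn n t + t ^ 2 / (2 * (n : ℝ) ^ 2)) ^ (n - 1)

/-- `b'_n(t) = (1 − (t/n)·w_n(t) + t²/(2n²))^(n-1)`. -/
def bn' (n : ℕ) (t : ℝ) : ℝ := (1 - (t / n) * wn n t + t ^ 2 / (2 * (n : ℝ) ^ 2)) ^ (n - 1)

/-- The kernel `K_n(t,x,y)` of the `n`-th symmetric Trotter product for the
harmonic oscillator. -/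
def Kn (n : ℕ) (t x y : ℝ) : ℝ :=
  Real.pi ^ (-(1 : ℝ) / 2) * Real.sqrt (wn n t / (an n t - bn n t)) *
    Real.exp ((2 * wn n t / (an n t - bn n t)) * x * y) *
    Real.exp ((-t / (4 * n) -
        ((n : ℝ) / (2 * t)) * (1 - (an' n t - bn' n t) / (an n t - bn n t))) * (x ^ 2 + y ^ 2))

/-- The broken path `x₀ = y, x₁, …, x_{n-1}, xₙ = x`, with intermediate points
given by `v : Fin (n-1) → ℝ`. -/
def path (n : ℕ) (x y : ℝ) (v : Fin (n - 1) → ℝ) (j : ℕ) : ℝ :=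
  if j = 0 then y else if j = n then x else if h : j - 1 < n - 1 then v ⟨j - 1, h⟩ else 0

lemma gauss_quad (a b : ℝ) (ha : 0 < a) :
    Integrable (fun u : ℝ => Real.exp (-a*u^2 + b*u)) ∧
    ∫ u : ℝ, Real.exp (-a*u^2 + b*u) = Real.sqrt (π/a) * Real.exp (b^2/(4*a)) := by
  have h : ∀ u : ℝ, -a*u^2 + b*u = -(a * (u - b/(2*a))^2) + b^2/(4*a) := by
    intro u; field_simp; ring
  have hint : Integrable (fun u : ℝ => Real.exp (-(a * (u - b/(2*a))^2))) := by
    have := (integrable_exp_neg_mul_sq ha).comp_sub_right (b/(2*a))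
    simpa using this
  constructor
  · simp_rw [h, Real.exp_add]
    exact hint.mul_const _
  · simp_rw [h, Real.exp_add, integral_mul_const]
    rw [integral_sub_right_eq_self (fun u : ℝ => Real.exp (-(a * u^2))) (b/(2*a))]
    simp_rw [neg_mul_eq_neg_mul (α := ℝ) a]
    rw [integral_gaussian]

def Lb (n : ℕ) (t : ℝ) : ℝ := 1 + (t / n) * wn n t + t ^ 2 / (2 * (n : ℝ) ^ 2)
/-- base of `bn` -/

def Mb (n : ℕ) (t : ℝ) : ℝ := 1 - (t / n) * wn n t + t ^ 2 / (2 * (n : ℝ) ^ 2)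

def SS (n : ℕ) (t : ℝ) (s : ℕ) : ℝ := Lb n t ^ s - Mb n t ^ s

def CC (n : ℕ) (t : ℝ) (s : ℕ) : ℝ := Lb n t ^ s + Mb n t ^ s

section facts

variable {n : ℕ} {t : ℝ} (hn : 1 ≤ n) (ht : 0 < t)

include hn ht

lemma hN : (0:ℝ) < n := by exact_mod_cast Nat.lt_of_lt_of_le Nat.zero_lt_one hn

lemma hw2 : wn n t ^ 2 = 1 + t ^ 2 / (4 * (n:ℝ) ^ 2) := by
  have hN := hN hn ht
  rw [wn, Real.sq_sqrt]; positivity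

lemma hw1 : 1 ≤ wn n t := by
  have hN := hN hn ht
  rw [wn]
  have h1 : (1:ℝ) ≤ 1 + t ^ 2 / (4 * (n:ℝ) ^ 2) := le_add_of_nonneg_right (by positivity)
  calc (1:ℝ) = Real.sqrt 1 := Real.sqrt_one.symm
  _ ≤ _ := Real.sqrt_le_sqrt h1

lemma hw0 : 0 < wn n t := lt_of_lt_of_le one_pos (hw1 hn ht)

lemma hLM : Lb n t * Mb n t = 1 := by
  have h2 := hw2 hn ht
  have hN := hN hn ht
  rw [Lb, Mb]
  linear_combination (-(t^2/(n:ℝ)^2)) * h2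

lemma hL1 : 1 < Lb n t := by
  have hN := hN hn ht
  have := hw0 hn ht
  rw [Lb]
  have h1 : 0 < (t / n) * wn n t := by positivity
  have h2 : 0 < t ^ 2 / (2 * (n:ℝ) ^ 2) := by positivity
  linarith

lemma hM0 : 0 < Mb n t := by
  have h := hLM hn ht
  have hL := hL1 hn ht
  nlinarith

lemma hML : Mb n t < Lb n t := by
  have h := hLM hn ht
  have hL := hL1 hn ht
  have hM := hM0 hn ht
  nlinarith

lemma hSpos (s : ℕ) (hs : 1 ≤ s) : 0 < SS n t s := by
  rw [SS, sub_pos]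
  exact pow_lt_pow_left₀ (hML hn ht) (le_of_lt (hM0 hn ht)) (by omega)

lemma hCpos (s : ℕ) : 0 < CC n t s := by
  have := hM0 hn ht
  have := hL1 hn ht
  have h1 : 0 < Lb n t ^ s := by positivity
  have h2 : 0 < Mb n t ^ s := by positivity
  rw [CC]; linarith

/-- sum relation: `(n/t) * (L + M) = 4c` with `c = t/(4n) + n/(2t)` -/

lemma hsum : ((n:ℝ)/t) * (Lb n t + Mb n t) = 4 * (t/(4*n) + n/(2*t)) := by
  have hN := hN hn ht
  rw [Lb, Mb]; field_simp; ring

lemma hdiff : ((n:ℝ)/t) * (Lb n t - Mb n t) = 2 * wn n t := by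
  have hN := hN hn ht
  rw [Lb, Mb]; field_simp; ring

lemma hpq (s : ℕ) : Lb n t ^ s * Mb n t ^ s = 1 := by
  rw [← mul_pow, hLM hn ht, one_pow]

end facts

section keys

variable {n : ℕ} {t : ℝ} (hn : 1 ≤ n) (ht : 0 < t)

include hn ht

lemma keyP (s : ℕ) :
    2 * (t/(4*(n:ℝ)) + (n:ℝ)/(2*t)) * SS n t s + wn n t * CC n t s = ((n:ℝ)/t) * SS n t (s+1) := by
  have h1 := hsum hn ht
  have h2 := hdiff hn ht
  simp only [SS, CC, pow_succ]
  linear_combination (-(Lb n t ^ s - Mb n t ^ s)/2) * h1 + (-(Lb n t ^ s + Mb n t ^ s)/2) * h2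

lemma key1 (s : ℕ) :
    2 * (t/(4*(n:ℝ)) + (n:ℝ)/(2*t)) * SS n t (s+1) - ((n:ℝ)/t) * SS n t s
      = wn n t * CC n t (s+1) := by
  have h1 := hsum hn ht
  have h2 := hdiff hn ht
  have h3 := hLM hn ht
  simp only [SS, CC, pow_succ]
  linear_combination ((-(Lb n t * Lb n t ^ s) + Mb n t * Mb n t ^ s)/2) * h1
    + ((Lb n t * Lb n t ^ s + Mb n t * Mb n t ^ s)/2) * h2
    + (((n:ℝ)/t) * (Lb n t ^ s - Mb n t ^ s)) * h3

lemma key2 (s : ℕ) :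
    ((n:ℝ)/t) * (CC n t s * SS n t (s+1)) - 4 * wn n t
      = ((n:ℝ)/t) * (CC n t (s+1) * SS n t s) := by
  have h2 := hdiff hn ht
  have h4 := hpq hn ht s
  simp only [SS, CC, pow_succ]
  linear_combination (2 * (Lb n t ^ s * Mb n t ^ s)) * h2 + (4 * wn n t) * h4

end keys

def gK (n : ℕ) (t u v : ℝ) : ℝ :=
  Real.exp (-t * u ^ 2 / (4 * n)) * Real.exp (-(n:ℝ) * (u - v) ^ 2 / (2 * t)) *
    Real.exp (-t * v ^ 2 / (4 * n))

def Phi (n : ℕ) (t : ℝ) (s : ℕ) (x y : ℝ) : ℝ :=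
  Real.sqrt (2 * Real.pi * t / n) ^ (s - 1) * Real.sqrt (SS n t 1 / SS n t s) *
    Real.exp (-(wn n t / 2) * (CC n t s / SS n t s) * (x ^ 2 + y ^ 2)
      + (2 * wn n t / SS n t s) * x * y)

lemma Phi_one {n : ℕ} {t : ℝ} (hn : 1 ≤ n) (ht : 0 < t) (x y : ℝ) :
    Phi n t 1 x y = gK n t x y := by
  have hN := hN hn ht
  have hw0 := hw0 hn ht
  have hS1 : SS n t 1 = 2 * (t / n) * wn n t := by
    simp only [SS, pow_one, Lb, Mb]; ring
  have hC1 : CC n t 1 = 2 + t^2/(n:ℝ)^2 := by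
    simp only [CC, pow_one, Lb, Mb]; ring
  rw [Phi, gK, hS1, hC1, ← Real.exp_add, ← Real.exp_add]
  simp only [Nat.sub_self, pow_zero, one_mul]
  rw [div_self (by positivity), Real.sqrt_one, one_mul]
  congr 1
  field_simp
  ring

lemma step_core (w c e Ss Cs Sp Cp : ℝ) (hw : 0 < w) (hc : 0 < c) (he : 0 < e)
    (hSs : 0 < Ss) (hSp : 0 < Sp) (hCs : 0 < Cs)
    (hkP : 2*c*Ss + w*Cs = e*Sp) (hk1 : 2*c*Sp - e*Ss = w*Cp)
    (hk2 : e*(Cs*Sp) - 4*w = e*(Cp*Ss)) (x y : ℝ) :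
    Integrable (fun u : ℝ => Real.exp (-c*(u^2+y^2) + e*u*y) *
      Real.exp (-(w/2)*(Cs/Ss)*(x^2+u^2) + (2*w/Ss)*x*u)) ∧
    ∫ u : ℝ, Real.exp (-c*(u^2+y^2) + e*u*y) *
        Real.exp (-(w/2)*(Cs/Ss)*(x^2+u^2) + (2*w/Ss)*x*u)
      = Real.sqrt ((2*π/e) * (Ss/Sp)) *
          Real.exp (-(w/2)*(Cp/Sp)*(x^2+y^2) + (2*w/Sp)*x*y) := by
  have hq : 0 < w/2 * (Cs/Ss) := by positivity
  set P : ℝ := c + w/2 * (Cs/Ss) with hPdef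
  have hP : 0 < P := by positivity
  set Q : ℝ := e*y + (2*w/Ss)*x with hQdef
  set R : ℝ := -c*y^2 - (w/2)*(Cs/Ss)*x^2 with hRdef
  have h1 : ∀ u : ℝ, Real.exp (-c*(u^2+y^2) + e*u*y) *
      Real.exp (-(w/2)*(Cs/Ss)*(x^2+u^2) + (2*w/Ss)*x*u)
      = Real.exp R * Real.exp (-P*u^2 + Q*u) := by
    intro u
    rw [← Real.exp_add, ← Real.exp_add]
    congr 1
    rw [hRdef, hPdef, hQdef]
    ring
  have hPdiv : P = e*Sp/(2*Ss) := by
    rw [hPdef, eq_div_iff (by positivity)]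
    field_simp
    linear_combination hkP
  have hsqrt : Real.sqrt (π/P) = Real.sqrt ((2*π/e) * (Ss/Sp)) := by
    congr 1
    rw [hPdiv]
    field_simp
  have h4P : e^2/(4*P) = e*Ss/(2*Sp) := by
    rw [hPdiv]; field_simp; ring
  have hA1 : c - e^2/(4*P) = w/2*(Cp/Sp) := by
    rw [h4P]
    field_simp
    linear_combination hk1
  have hA2 : w/2*(Cs/Ss) - (2*w/Ss)^2/(4*P) = w/2*(Cp/Sp) := by
    rw [hPdiv]
    field_simp
    linear_combination 4*hk2
  have hA3 : 2 * e * ((2*w/Ss)) / (4*P) = 2*w/Sp := by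
    rw [hPdiv]
    field_simp
    ring
  have hexp : R + Q^2/(4*P) = -(w/2)*(Cp/Sp)*(x^2+y^2) + (2*w/Sp)*x*y := by
    rw [hRdef, hQdef]
    linear_combination (-(y^2)) * hA1 + (-(x^2)) * hA2 + (x*y) * hA3
  constructor
  · simp_rw [h1]
    exact ((gauss_quad P Q hP).1).const_mul _
  · simp_rw [h1, integral_const_mul, (gauss_quad P Q hP).2, hsqrt.symm]
    rw [← hexp, mul_comm (Real.exp R), mul_assoc, ← Real.exp_add,
      add_comm (Q^2/(4*P)) R]

lemma gK_eq {n : ℕ} {t : ℝ} (hn : 1 ≤ n) (ht : 0 < t) (u v : ℝ) :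
    gK n t u v = Real.exp (-(t/(4*(n:ℝ)) + (n:ℝ)/(2*t))*(u^2+v^2) + ((n:ℝ)/t)*u*v) := by
  have hN := hN hn ht
  rw [gK, ← Real.exp_add, ← Real.exp_add]
  congr 1
  field_simp
  ring

lemma gK_pos {n : ℕ} {t : ℝ} (u v : ℝ) : 0 < gK n t u v := by
  rw [gK]; positivity

lemma step {n : ℕ} {t : ℝ} (hn : 1 ≤ n) (ht : 0 < t) (m : ℕ) (x y : ℝ) :
    Integrable (fun u => gK n t u y * Phi n t (m+1) x u) ∧
    ∫ u, gK n t u y * Phi n t (m+1) x u = Phi n t (m+2) x y := by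
  have hN := hN hn ht
  have hw0 := hw0 hn ht
  have hSs : 0 < SS n t (m+1) := hSpos hn ht _ (by omega)
  have hSp : 0 < SS n t (m+2) := hSpos hn ht _ (by omega)
  have hCs : 0 < CC n t (m+1) := hCpos hn ht (m+1)
  have hSone : 0 < SS n t 1 := hSpos hn ht 1 le_rfl
  have hc : 0 < t/(4*(n:ℝ)) + (n:ℝ)/(2*t) := by positivity
  have he : (0:ℝ) < (n:ℝ)/t := by positivity
  obtain ⟨hint, hval⟩ := step_core (wn n t) (t/(4*(n:ℝ)) + (n:ℝ)/(2*t)) ((n:ℝ)/t)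
    (SS n t (m+1)) (CC n t (m+1)) (SS n t (m+2)) (CC n t (m+2)) hw0 hc he hSs hSp hCs
    (keyP hn ht (m+1)) (key1 hn ht (m+1)) (key2 hn ht (m+1)) x y
  have h2 : ∀ u : ℝ, gK n t u y * Phi n t (m+1) x u
      = (Real.sqrt (2 * Real.pi * t / n) ^ m * Real.sqrt (SS n t 1 / SS n t (m+1))) *
        (Real.exp (-(t/(4*(n:ℝ)) + (n:ℝ)/(2*t))*(u^2+y^2) + ((n:ℝ)/t)*u*y) *
         Real.exp (-(wn n t/2)*(CC n t (m+1)/SS n t (m+1))*(x^2+u^2)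
           + (2*wn n t/SS n t (m+1))*x*u)) := by
    intro u
    rw [gK_eq hn ht, Phi, Nat.add_sub_cancel]
    ring
  have hpre : (Real.sqrt (2 * Real.pi * t / n) ^ m * Real.sqrt (SS n t 1 / SS n t (m+1))) *
      Real.sqrt ((2*π/((n:ℝ)/t)) * (SS n t (m+1)/SS n t (m+2)))
      = Real.sqrt (2 * Real.pi * t / n) ^ (m+1) * Real.sqrt (SS n t 1 / SS n t (m+2)) := by
    have h3 : (2*π/((n:ℝ)/t)) * (SS n t (m+1)/SS n t (m+2))
        = (2*Real.pi*t/(n:ℝ)) * (SS n t (m+1)/SS n t (m+2)) := by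
      rw [div_div_eq_mul_div]
    rw [h3, Real.sqrt_mul (by positivity), pow_succ]
    rw [mul_mul_mul_comm, ← Real.sqrt_mul (by positivity)]
    congr 2
    field_simp
  constructor
  · simp_rw [h2]
    exact hint.const_mul _
  · simp_rw [h2, integral_const_mul, hval]
    rw [Phi, show m + 2 - 1 = m + 1 from rfl, ← mul_assoc, hpre]

lemma path_zero (n : ℕ) (x y : ℝ) (v : Fin (n-1) → ℝ) : path n x y v 0 = y := rfl

lemma path_one_one (x y : ℝ) (v : Fin 0 → ℝ) : path 1 x y v 1 = x := rfl

lemma continuous_path (n : ℕ) (x y : ℝ) (j : ℕ) :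
    Continuous fun v : Fin (n-1) → ℝ => path n x y v j := by
  unfold path
  split_ifs with h1 h2 h3
  · exact continuous_const
  · exact continuous_const
  · exact continuous_apply _
  · exact continuous_const

lemma continuous_gK2 (n : ℕ) (t : ℝ) : Continuous fun p : ℝ × ℝ => gK n t p.1 p.2 := by
  unfold gK; fun_prop

lemma continuous_prodgK (n : ℕ) (t : ℝ) (k : ℕ) (x y : ℝ) :
    Continuous fun v : Fin (k+1-1) → ℝ =>
      ∏ j ∈ Finset.range (k+1), gK n t (path (k+1) x y v (j+1)) (path (k+1) x y v j) := by
  apply continuous_finset_prod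
  intro j _
  have h1 := continuous_path (k+1) x y (j+1)
  have h2 := continuous_path (k+1) x y j
  unfold gK
  exact ((Real.continuous_exp.comp ((continuous_const.mul (h1.pow 2)).div_const _)).mul
    (Real.continuous_exp.comp ((continuous_const.mul ((h1.sub h2).pow 2)).div_const _))).mul
    (Real.continuous_exp.comp ((continuous_const.mul (h2.pow 2)).div_const _))

lemma path_cons (k : ℕ) (x y u : ℝ) (v : Fin (k+1-1) → ℝ) (j : ℕ) (hj : j ≤ k + 1) :
    path (k+2) x y (Fin.cons u v : Fin (k+2-1) → ℝ) (j+1) = path (k+1) x u v j := by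
  unfold path
  by_cases h0 : j = 0
  · subst h0
    rw [if_neg (by omega : ¬0+1 = 0), if_neg (by omega : ¬0+1 = k+2), if_pos rfl,
      dif_pos (by omega : 0+1-1 < k+2-1)]
    exact Fin.cons_zero (n := k) (α := fun _ => ℝ) u v
  · by_cases hk : j = k + 1
    · subst hk
      rw [if_neg (by omega : ¬(k+1)+1 = 0), if_pos (by omega : (k+1)+1 = k+2),
        if_neg h0, if_pos rfl]
    · have h1 : 1 ≤ j := by omega
      have h2 : j < k + 1 := by omega
      rw [if_neg (by omega : ¬j+1 = 0), if_neg (by omega : ¬j+1 = k+2), if_neg h0,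
        if_neg hk, dif_pos (by omega : j+1-1 < k+2-1), dif_pos (by omega : j-1 < k+1-1)]
      have : (⟨j+1-1, by omega⟩ : Fin (k+2-1)) = Fin.succ ⟨j-1, by omega⟩ := by
        apply Fin.ext; simp; omega
      rw [this, Fin.cons_succ]

lemma prodgK_pos (n : ℕ) (t : ℝ) (m : ℕ) (x y : ℝ) (v : Fin (m-1) → ℝ) :
    0 < ∏ j ∈ Finset.range m, gK n t (path m x y v (j+1)) (path m x y v j) :=
  Finset.prod_pos fun j _ => gK_pos _ _

lemma main_ind {n : ℕ} {t : ℝ} (hn : 1 ≤ n) (ht : 0 < t) :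
    ∀ (k : ℕ) (x y : ℝ),
      Integrable (fun v : Fin (k+1-1) → ℝ => ∏ j ∈ Finset.range (k+1),
        gK n t (path (k+1) x y v (j+1)) (path (k+1) x y v j)) ∧
      (∫ v : Fin (k+1-1) → ℝ, ∏ j ∈ Finset.range (k+1),
        gK n t (path (k+1) x y v (j+1)) (path (k+1) x y v j)) = Phi n t (k+1) x y := by
  intro k
  induction k with
  | zero =>
    intro x y
    show Integrable (fun v : Fin 0 → ℝ => ∏ j ∈ Finset.range 1,
        gK n t (path 1 x y v (j+1)) (path 1 x y v j)) ∧
      (∫ v : Fin 0 → ℝ, ∏ j ∈ Finset.range 1,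
        gK n t (path 1 x y v (j+1)) (path 1 x y v j)) = Phi n t 1 x y
    have hconst : (fun v : Fin 0 → ℝ => ∏ j ∈ Finset.range 1,
        gK n t (path 1 x y v (j+1)) (path 1 x y v j)) = fun _ => gK n t x y := by
      funext v
      rw [Finset.prod_range_one]
      rfl
    have hvol : (volume : Measure (Fin 0 → ℝ)) Set.univ = 1 := by
      rw [volume_pi]
      exact MeasureTheory.Measure.pi_empty_univ _
    rw [hconst]
    constructor
    · rw [integrable_const_iff]
      right; exact ⟨by rw [hvol]; exact ENNReal.one_lt_top⟩
    · rw [integral_const, Measure.real, hvol, Phi_one hn ht]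
      simp
  | succ k ih =>
    intro x y
    show Integrable (fun v : Fin (k+2-1) → ℝ => ∏ j ∈ Finset.range (k+2),
        gK n t (path (k+2) x y v (j+1)) (path (k+2) x y v j)) ∧
      (∫ v : Fin (k+2-1) → ℝ, ∏ j ∈ Finset.range (k+2),
        gK n t (path (k+2) x y v (j+1)) (path (k+2) x y v j)) = Phi n t (k+2) x y
    set F : (Fin (k+2-1) → ℝ) → ℝ := fun v => ∏ j ∈ Finset.range (k+2),
        gK n t (path (k+2) x y v (j+1)) (path (k+2) x y v j) with hF
    have hcont : Continuous F := continuous_prodgK n t (k+1) x y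
    set e := MeasurableEquiv.piFinSuccAbove (fun _ : Fin (k+1) => ℝ) 0 with he
    have hesymm : ∀ z : ℝ × (Fin k → ℝ), e.symm z = Fin.cons z.1 z.2 := by
      intro z
      simp only [he, MeasurableEquiv.piFinSuccAbove_symm_apply, Fin.insertNthEquiv,
        Fin.insertNth_zero, Equiv.coe_fn_mk, cast_eq]
    have h0 := measurePreserving_piFinSuccAbove (fun _ : Fin (k+1) => (volume : Measure ℝ)) 0
    have hPe : MeasurePreserving e (volume : Measure (Fin (k+1) → ℝ))
        ((volume : Measure ℝ).prod (volume : Measure (Fin k → ℝ))) := by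
      exact h0
    have hPmeas : MeasurePreserving e.symm
        ((volume : Measure ℝ).prod (volume : Measure (Fin k → ℝ)))
        (volume : Measure (Fin (k+1) → ℝ)) := hPe.symm e
    have key : ∀ z : ℝ × (Fin k → ℝ), F (e.symm z) = gK n t z.1 y *
        ∏ j ∈ Finset.range (k+1),
          gK n t (path (k+1) x z.1 z.2 (j+1)) (path (k+1) x z.1 z.2 j) := by
      intro z
      rw [hesymm, hF]
      show (∏ j ∈ Finset.range (k+1+1), gK n t (path (k+2) x y (Fin.cons z.1 z.2) (j+1))
        (path (k+2) x y (Fin.cons z.1 z.2) j)) = _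
      rw [Finset.prod_range_succ']
      rw [mul_comm]
      congr 1
      · apply Finset.prod_congr rfl
        intro j hj
        have hj' : j ≤ k := Nat.lt_succ_iff.mp (Finset.mem_range.mp hj)
        rw [path_cons k x y z.1 z.2 (j+1) (by omega), path_cons k x y z.1 z.2 j (by omega)]
    have hmeas : AEStronglyMeasurable (fun z : ℝ × (Fin k → ℝ) => F (e.symm z))
        ((volume : Measure ℝ).prod volume) :=
      ((hcont.measurable).comp e.symm.measurable).aestronglyMeasurable
    have hInt2 : Integrable (fun z : ℝ × (Fin k → ℝ) => F (e.symm z))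
        ((volume : Measure ℝ).prod volume) := by
      rw [integrable_prod_iff hmeas]
      constructor
      · refine Filter.Eventually.of_forall (fun u => ?_)
        have h6 : (fun v : Fin k → ℝ => F (e.symm (u, v))) = fun v : Fin k → ℝ =>
            gK n t u y * ∏ j ∈ Finset.range (k+1),
              gK n t (path (k+1) x u v (j+1)) (path (k+1) x u v j) := by
          funext v; exact key (u, v)
        rw [h6]
        exact ((ih x u).1).const_mul _
      · have h7 : (fun u : ℝ => ∫ v : Fin k → ℝ, ‖F (e.symm (u, v))‖) =
            fun u => gK n t u y * Phi n t (k+1) x u := by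
          funext u
          have h5 : ∀ v : Fin k → ℝ, ‖F (e.symm (u, v))‖ = gK n t u y *
              ∏ j ∈ Finset.range (k+1),
                gK n t (path (k+1) x u v (j+1)) (path (k+1) x u v j) := by
            intro v
            rw [Real.norm_eq_abs, abs_of_pos (by rw [hF]; exact prodgK_pos n t (k+2) x y _),
              key (u, v)]
          simp_rw [h5]
          rw [integral_const_mul]
          exact congrArg (fun r => gK n t u y * r) (ih x u).2
        rw [h7]
        exact (step hn ht k x y).1
    constructor
    · exact (hPmeas.integrable_comp_emb e.symm.measurableEmbedding).mp hInt2
    · calc ∫ v, F v = ∫ z : ℝ × (Fin k → ℝ), F (e.symm z)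
            ∂((volume : Measure ℝ).prod volume) := (hPmeas.integral_comp' F).symm
      _ = ∫ u : ℝ, ∫ v : Fin k → ℝ, F (e.symm (u, v)) := integral_prod _ hInt2
      _ = ∫ u : ℝ, gK n t u y * Phi n t (k+1) x u := by
          congr 1
          funext u
          simp_rw [key]
          rw [integral_const_mul]
          exact congrArg (fun r => gK n t u y * r) (ih x u).2
      _ = Phi n t (k+2) x y := (step hn ht k x y).2

lemma final_algebra {n : ℕ} {t : ℝ} (hn : 1 ≤ n) (ht : 0 < t) (x y : ℝ) :
    ((n : ℝ) / (2 * Real.pi * t)) ^ ((n : ℝ) / 2) * Phi n t n x y = Kn n t x y := by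
  obtain ⟨m, rfl⟩ : ∃ m, n = m + 1 := ⟨n - 1, by omega⟩
  have hN := hN hn ht
  have hw0 := hw0 hn ht
  have hS : 0 < SS (m+1) t (m+1) := hSpos hn ht _ (by omega)
  have hSone : 0 < SS (m+1) t 1 := hSpos hn ht 1 le_rfl
  have hk1 := key1 hn ht m
  have hpi := Real.pi_pos
  have hN' : ((m+1:ℕ):ℝ) ≠ 0 := hN.ne'
  have ht' : t ≠ 0 := ht.ne' 
  have hab : an (m+1) t - bn (m+1) t = SS (m+1) t (m+1) := rfl
  have hab' : an' (m+1) t - bn' (m+1) t = SS (m+1) t m := rfl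
  have hS1 : SS (m+1) t 1 = 2*(t/((m:ℝ)+1))*wn (m+1) t := by
    simp only [SS, pow_one, Lb, Mb]
    push_cast
    ring
  have hcoef : -(wn (m+1) t/2) * (CC (m+1) t (m+1) / SS (m+1) t (m+1))
      = -t/(4*((m+1:ℕ):ℝ)) - (((m+1:ℕ):ℝ)/(2*t)) *
        (1 - SS (m+1) t m / SS (m+1) t (m+1)) := by
    have h9 : -t/(4*((m+1:ℕ):ℝ)) - (((m+1:ℕ):ℝ)/(2*t)) *
        (1 - SS (m+1) t m / SS (m+1) t (m+1))
        = ((-t/(4*((m+1:ℕ):ℝ)) - ((m+1:ℕ):ℝ)/(2*t)) * SS (m+1) t (m+1)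
            + (((m+1:ℕ):ℝ)/(2*t)) * SS (m+1) t m) / SS (m+1) t (m+1) := by
      rw [add_div, mul_div_cancel_right₀ _ hS.ne', mul_div_assoc]
      ring
    rw [h9, show -(wn (m+1) t/2) * (CC (m+1) t (m+1) / SS (m+1) t (m+1))
        = (-(wn (m+1) t * CC (m+1) t (m+1))/2) / SS (m+1) t (m+1) by ring]
    congr 1
    linear_combination ((1/2 : ℝ)) * hk1
  rw [Phi, Kn, hab, hab']
  have hexp : Real.exp (-(wn (m+1) t / 2) * (CC (m+1) t (m+1) / SS (m+1) t (m+1)) * (x ^ 2 + y ^ 2)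
        + 2 * wn (m+1) t / SS (m+1) t (m+1) * x * y)
      = Real.exp ((2 * wn (m+1) t / SS (m+1) t (m+1)) * x * y) *
        Real.exp ((-t / (4 * ((m+1:ℕ):ℝ)) - (((m+1:ℕ):ℝ) / (2 * t)) *
          (1 - SS (m+1) t m / SS (m+1) t (m+1))) * (x ^ 2 + y ^ 2)) := by
    rw [← Real.exp_add]
    congr 1
    linear_combination (x^2 + y^2) * hcoef
  rw [hexp]
  have hpref : (((m+1:ℕ):ℝ) / (2 * Real.pi * t)) ^ (((m+1:ℕ):ℝ) / 2) *
      (Real.sqrt (2 * Real.pi * t / ((m+1:ℕ):ℝ)) ^ (m + 1 - 1) *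
        Real.sqrt (SS (m+1) t 1 / SS (m+1) t (m+1)))
      = Real.pi ^ (-(1:ℝ)/2) * Real.sqrt (wn (m+1) t / SS (m+1) t (m+1)) := by
    have hbase : (0:ℝ) < 2 * Real.pi * t / ((m+1:ℕ):ℝ) := by positivity
    have hB : Real.sqrt (2 * Real.pi * t / ((m+1:ℕ):ℝ)) ^ (m+1-1)
        = (2 * Real.pi * t / ((m+1:ℕ):ℝ)) ^ ((m:ℝ)/2) := by
      rw [show m+1-1 = m from rfl, Real.sqrt_eq_rpow,
        ← Real.rpow_natCast ((2 * Real.pi * t / ((m+1:ℕ):ℝ)) ^ ((1:ℝ)/2)) m,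
        ← Real.rpow_mul hbase.le]
      congr 1
      ring
    have hA : (((m+1:ℕ):ℝ) / (2 * Real.pi * t)) ^ (((m+1:ℕ):ℝ) / 2)
        = (2 * Real.pi * t / ((m+1:ℕ):ℝ)) ^ (-(((m+1:ℕ):ℝ) / 2)) := by
      rw [show ((m+1:ℕ):ℝ) / (2 * Real.pi * t) = (2 * Real.pi * t / ((m+1:ℕ):ℝ))⁻¹ by
        rw [inv_div], Real.inv_rpow hbase.le, ← Real.rpow_neg hbase.le]
    rw [hB, hA, ← mul_assoc, ← Real.rpow_add hbase]
    have hexp2 : -(((m+1:ℕ):ℝ) / 2) + (m:ℝ)/2 = -(1/2 : ℝ) := by push_cast; ring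
    rw [hexp2]
    have h12 : (2 * Real.pi * t / ((m+1:ℕ):ℝ)) ^ (-(1/2 : ℝ))
        = Real.sqrt (((m+1:ℕ):ℝ) / (2 * Real.pi * t)) := by
      rw [Real.rpow_neg hbase.le, Real.sqrt_eq_rpow, ← Real.inv_rpow hbase.le, inv_div]
    rw [h12, ← Real.sqrt_mul (by positivity) , hS1]
    have hRHS : Real.pi ^ (-(1:ℝ)/2) = Real.sqrt (Real.pi⁻¹) := by
      rw [Real.sqrt_eq_rpow, Real.inv_rpow Real.pi_nonneg, ← Real.rpow_neg Real.pi_nonneg]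
      norm_num
    rw [hRHS, ← Real.sqrt_mul (by positivity)]
    congr 1
    push_cast
    field_simp
  rw [← mul_assoc, hpref]
  ring

/-- The `(n−1)`-fold Gaussian integral expression for the kernel of
`[e^{-tV/2n} e^{-tH₀/n} e^{-tV/2n}]^n` (harmonic oscillator, `V(x) = x²/2`,
`H₀ = -½ d²/dx²`) equals `K_n(t,x,y)`. -/
theorem gaussian_integral_eq_Kn (n : ℕ) (hn : 1 ≤ n) (t : ℝ) (ht : 0 < t) (x y : ℝ) :
    ((n : ℝ) / (2 * Real.pi * t)) ^ ((n : ℝ) / 2) *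
      ∫ v : Fin (n - 1) → ℝ,
        ∏ j ∈ Finset.range n,
          (Real.exp (-t * (path n x y v (j + 1)) ^ 2 / (4 * n)) *
            Real.exp (-(n : ℝ) * (path n x y v (j + 1) - path n x y v j) ^ 2 / (2 * t)) *
            Real.exp (-t * (path n x y v j) ^ 2 / (4 * n)))
      = Kn n t x y := by
  obtain ⟨m, rfl⟩ : ∃ m, n = m + 1 := ⟨n - 1, by omega⟩
  have hmain : (∫ v : Fin (m + 1 - 1) → ℝ,
      ∏ j ∈ Finset.range (m + 1),
        (Real.exp (-t * (path (m+1) x y v (j + 1)) ^ 2 / (4 * ((m+1 : ℕ) : ℝ))) *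
          Real.exp (-((m+1 : ℕ) : ℝ) * (path (m+1) x y v (j + 1) - path (m+1) x y v j) ^ 2
            / (2 * t)) *
          Real.exp (-t * (path (m+1) x y v j) ^ 2 / (4 * ((m+1 : ℕ) : ℝ)))))
      = Phi (m+1) t (m+1) x y := (main_ind hn ht m x y).2
  rw [hmain]
  exact final_algebra hn ht x y
end
end

section
/- For every integer n ≥ 1, every t > 0 and every f ∈ L²(ℝ), the n-th power K(t/n)^n of the operator K(t/n) = V_{t/n} ∘ P_{t/n} ∘ V_{t/n} is the integral operator with kernel K_n(t,·,·): for almost every x ∈ ℝ, (K(t/n)^n f)(x) = ∫_ℝ K_n(t,x,y)·f(y) dy. -/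
noncomputable section
open MeasureTheory Real

/-- The complex Hilbert space `L²(ℝ)`. -/
abbrev L2 := Lp ℂ 2 (volume : Measure ℝ)


/-! ### Auxiliary Gaussian integral lemmas -/

lemma exp_quad_eq (a b : ℝ) (ha : 0 < a) (z : ℝ) :
    Real.exp (-a * z ^ 2 + b * z)
      = Real.exp (b ^ 2 / (4 * a)) * Real.exp (-a * (z - b / (2 * a)) ^ 2) := by
  rw [← Real.exp_add]; congr 1; field_simp; ring

lemma integrable_exp_quad (a b : ℝ) (ha : 0 < a) :
    Integrable (fun z : ℝ => Real.exp (-a * z ^ 2 + b * z)) := by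
  have h := (integrable_exp_neg_mul_sq ha).comp_sub_right (b / (2 * a))
  have h2 := h.const_mul (Real.exp (b ^ 2 / (4 * a)))
  exact h2.congr (Filter.Eventually.of_forall fun z => (exp_quad_eq a b ha z).symm)

lemma integral_exp_quad (a b : ℝ) (ha : 0 < a) :
    ∫ z : ℝ, Real.exp (-a * z ^ 2 + b * z) =
      Real.sqrt (π / a) * Real.exp (b ^ 2 / (4 * a)) := by
  simp_rw [exp_quad_eq a b ha]
  rw [MeasureTheory.integral_const_mul]
  rw [integral_sub_right_eq_self (fun z => Real.exp (-a * z ^ 2)) (b / (2 * a))]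
  rw [integral_gaussian]
  ring

lemma continuous_exp_quad (a b : ℝ) : Continuous (fun z : ℝ => Real.exp (-a * z ^ 2 + b * z)) :=
  Real.continuous_exp.comp (by continuity)

lemma integrable_exp_quad_mul_norm (a b : ℝ) (ha : 0 < a) (f : ℝ → ℂ)
    (hf : MemLp f 2 volume) :
    Integrable (fun z : ℝ => Real.exp (-a * z ^ 2 + b * z) * ‖f z‖) := by
  have hsq : Integrable (fun z : ℝ => ‖f z‖ ^ 2) :=
    (memLp_two_iff_integrable_sq_norm hf.1).mp hf
  have hg : Integrable (fun z : ℝ =>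
      (Real.exp (-(2 * a) * z ^ 2 + (2 * b) * z) + ‖f z‖ ^ 2) / 2) :=
    ((integrable_exp_quad (2 * a) (2 * b) (by linarith)).add hsq).div_const 2
  refine hg.mono' ((continuous_exp_quad a b).aestronglyMeasurable.mul hf.1.norm) ?_
  refine Filter.Eventually.of_forall fun z => ?_
  have h2 : Real.exp (-(2 * a) * z ^ 2 + (2 * b) * z)
      = Real.exp (-a * z ^ 2 + b * z) * Real.exp (-a * z ^ 2 + b * z) := by
    rw [← Real.exp_add]; ring_nf
  rw [Real.norm_eq_abs, abs_of_nonneg (by positivity), h2]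
  nlinarith [sq_nonneg (Real.exp (-a * z ^ 2 + b * z) - ‖f z‖), norm_nonneg (f z)]

/-- Composition of two Gaussian integral kernels. -/
lemma gauss_step (a₁ b₁ c₁ a₂ b₂ c₂ x : ℝ) (ha₁ : 0 < a₁) (ha₂ : 0 < a₂)
    (hb : b₂ ^ 2 < 4 * (a₁ + a₂) * a₂) (f : ℝ → ℂ) (hf : MemLp f 2 volume) :
    ∫ y : ℝ, (↑(c₁ * Real.exp (-a₁ * (x ^ 2 + y ^ 2) + b₁ * x * y)) : ℂ) *
        ∫ z : ℝ, (↑(c₂ * Real.exp (-a₂ * (y ^ 2 + z ^ 2) + b₂ * y * z)) : ℂ) * f z =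
    ∫ z : ℝ, (↑(c₁ * c₂ * Real.sqrt (π / (a₁ + a₂)) *
        Real.exp (-(a₁ - b₁ ^ 2 / (4 * (a₁ + a₂))) * x ^ 2
          - (a₂ - b₂ ^ 2 / (4 * (a₁ + a₂))) * z ^ 2
          + (b₁ * b₂ / (2 * (a₁ + a₂))) * x * z)) : ℂ) * f z := by
  set S : ℝ := a₁ + a₂ with hSdef
  have hS : 0 < S := by positivity
  set F : ℝ → ℝ → ℂ := fun y z =>
    (↑(c₁ * c₂ * Real.exp (-a₁ * x ^ 2 - a₂ * z ^ 2)) : ℂ) * f z *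
      (↑(Real.exp (-S * y ^ 2 + (b₁ * x + b₂ * z) * y)) : ℂ) with hFdef
  have hker : ∀ y z : ℝ, c₁ * Real.exp (-a₁ * (x ^ 2 + y ^ 2) + b₁ * x * y) *
      (c₂ * Real.exp (-a₂ * (y ^ 2 + z ^ 2) + b₂ * y * z))
      = c₁ * c₂ * Real.exp (-a₁ * x ^ 2 - a₂ * z ^ 2) *
        Real.exp (-S * y ^ 2 + (b₁ * x + b₂ * z) * y) := by
    intro y z
    have e1 : Real.exp (-a₁ * (x ^ 2 + y ^ 2) + b₁ * x * y) *
        Real.exp (-a₂ * (y ^ 2 + z ^ 2) + b₂ * y * z)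
        = Real.exp (-a₁ * x ^ 2 - a₂ * z ^ 2) *
          Real.exp (-S * y ^ 2 + (b₁ * x + b₂ * z) * y) := by
      rw [← Real.exp_add, ← Real.exp_add]; congr 1; simp only [hSdef]; ring
    linear_combination c₁ * c₂ * e1
  have step1 : (∫ y : ℝ, (↑(c₁ * Real.exp (-a₁ * (x ^ 2 + y ^ 2) + b₁ * x * y)) : ℂ) *
        ∫ z : ℝ, (↑(c₂ * Real.exp (-a₂ * (y ^ 2 + z ^ 2) + b₂ * y * z)) : ℂ) * f z)
      = ∫ y : ℝ, ∫ z : ℝ, F y z := by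
    refine integral_congr_ae (Filter.Eventually.of_forall fun y => ?_)
    dsimp only
    rw [← MeasureTheory.integral_const_mul]
    refine integral_congr_ae (Filter.Eventually.of_forall fun z => ?_)
    dsimp only
    calc (↑(c₁ * Real.exp (-a₁ * (x ^ 2 + y ^ 2) + b₁ * x * y)) : ℂ) *
          ((↑(c₂ * Real.exp (-a₂ * (y ^ 2 + z ^ 2) + b₂ * y * z)) : ℂ) * f z)
        = ↑(c₁ * Real.exp (-a₁ * (x ^ 2 + y ^ 2) + b₁ * x * y) *
            (c₂ * Real.exp (-a₂ * (y ^ 2 + z ^ 2) + b₂ * y * z))) * f z := by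
          push_cast; ring
      _ = F y z := by rw [hker y z]; simp only [hFdef]; push_cast; ring
  have hmeas : AEStronglyMeasurable (Function.uncurry F) (volume.prod volume) := by
    apply AEStronglyMeasurable.mul
    apply AEStronglyMeasurable.mul
    · exact (Complex.continuous_ofReal.comp <|
        continuous_const.mul (Real.continuous_exp.comp (by continuity))).aestronglyMeasurable
    · exact hf.1.comp_snd
    · exact (Complex.continuous_ofReal.comp
        (Real.continuous_exp.comp (by continuity))).aestronglyMeasurable
  have hInt : Integrable (Function.uncurry F) (volume.prod volume) := by
    rw [integrable_prod_iff' hmeas]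
    constructor
    · refine Filter.Eventually.of_forall fun z => ?_
      have h1 : Integrable (fun y : ℝ => Real.exp (-S * y ^ 2 + (b₁ * x + b₂ * z) * y)) :=
        integrable_exp_quad S _ hS
      exact (h1.ofReal.const_mul
        ((↑(c₁ * c₂ * Real.exp (-a₁ * x ^ 2 - a₂ * z ^ 2)) : ℂ) * f z)).congr
        (Filter.Eventually.of_forall fun y => rfl)
    · have hnorm : ∀ z : ℝ, (∫ y : ℝ, ‖F y z‖) =
          (|c₁ * c₂| * Real.sqrt (π / S) *
            Real.exp (-a₁ * x ^ 2 + (b₁ * x) ^ 2 / (4 * S))) *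
            (Real.exp (-(a₂ - b₂ ^ 2 / (4 * S)) * z ^ 2 + (b₁ * b₂ * x / (2 * S)) * z) *
              ‖f z‖) := by
        intro z
        have h2 : ∀ y : ℝ, ‖F y z‖ = (|c₁ * c₂| * Real.exp (-a₁ * x ^ 2 - a₂ * z ^ 2) * ‖f z‖) *
            Real.exp (-S * y ^ 2 + (b₁ * x + b₂ * z) * y) := by
          intro y
          simp only [hFdef, norm_mul, Complex.norm_real, Real.norm_eq_abs, abs_mul,
            abs_of_pos (Real.exp_pos _)]
          try ring
        simp_rw [h2]
        rw [MeasureTheory.integral_const_mul, integral_exp_quad S _ hS]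
        have hexp : Real.exp (-a₁ * x ^ 2 - a₂ * z ^ 2) *
            Real.exp ((b₁ * x + b₂ * z) ^ 2 / (4 * S))
            = Real.exp (-a₁ * x ^ 2 + (b₁ * x) ^ 2 / (4 * S)) *
              Real.exp (-(a₂ - b₂ ^ 2 / (4 * S)) * z ^ 2 + (b₁ * b₂ * x / (2 * S)) * z) := by
          rw [← Real.exp_add, ← Real.exp_add]
          congr 1
          field_simp
          ring
        linear_combination (|c₁ * c₂| * ‖f z‖ * Real.sqrt (π / S)) * hexp
      have hε : (0:ℝ) < a₂ - b₂ ^ 2 / (4 * S) := by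
        rw [sub_pos, div_lt_iff₀ (by positivity)]
        linarith
      have hint2 : Integrable (fun z : ℝ =>
          Real.exp (-(a₂ - b₂ ^ 2 / (4 * S)) * z ^ 2 + (b₁ * b₂ * x / (2 * S)) * z) * ‖f z‖) :=
        integrable_exp_quad_mul_norm _ _ hε f hf
      exact (hint2.const_mul _).congr (Filter.Eventually.of_forall fun z => (hnorm z).symm)
  have step2 : (∫ y : ℝ, ∫ z : ℝ, F y z) = ∫ z : ℝ, ∫ y : ℝ, F y z :=
    integral_integral_swap hInt
  have step3 : ∀ z : ℝ, (∫ y : ℝ, F y z) =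
      (↑(c₁ * c₂ * Real.sqrt (π / (a₁ + a₂)) *
        Real.exp (-(a₁ - b₁ ^ 2 / (4 * (a₁ + a₂))) * x ^ 2
          - (a₂ - b₂ ^ 2 / (4 * (a₁ + a₂))) * z ^ 2
          + (b₁ * b₂ / (2 * (a₁ + a₂))) * x * z)) : ℂ) * f z := by
    intro z
    have h3 : (∫ y : ℝ, F y z) = (↑(c₁ * c₂ * Real.exp (-a₁ * x ^ 2 - a₂ * z ^ 2)) : ℂ) * f z *
        ↑(∫ y : ℝ, Real.exp (-S * y ^ 2 + (b₁ * x + b₂ * z) * y)) := by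
      simp only [hFdef]
      rw [MeasureTheory.integral_const_mul]
      congr 1
      exact integral_ofReal
    rw [h3, integral_exp_quad S _ hS]
    have e2 : Real.exp (-a₁ * x ^ 2 - a₂ * z ^ 2) *
        Real.exp ((b₁ * x + b₂ * z) ^ 2 / (4 * S))
        = Real.exp (-(a₁ - b₁ ^ 2 / (4 * S)) * x ^ 2
            - (a₂ - b₂ ^ 2 / (4 * S)) * z ^ 2 + (b₁ * b₂ / (2 * S)) * x * z) := by
      rw [← Real.exp_add]; congr 1; field_simp; ring
    have hexp2 : c₁ * c₂ * Real.exp (-a₁ * x ^ 2 - a₂ * z ^ 2) *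
        (Real.sqrt (π / S) * Real.exp ((b₁ * x + b₂ * z) ^ 2 / (4 * S)))
        = c₁ * c₂ * Real.sqrt (π / S) *
          Real.exp (-(a₁ - b₁ ^ 2 / (4 * S)) * x ^ 2
            - (a₂ - b₂ ^ 2 / (4 * S)) * z ^ 2 + (b₁ * b₂ / (2 * S)) * x * z) := by
      linear_combination (c₁ * c₂ * Real.sqrt (π / S)) * e2
    rw [← hSdef, ← hexp2]
    simp only [Complex.ofReal_mul]
    ring
  rw [step1, step2]
  exact integral_congr_ae (Filter.Eventually.of_forall fun z => step3 z)

/-! ### Kernel parameter recursion -/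

def DD (l u : ℝ) (m : ℕ) : ℝ := l ^ m - u ^ m
def PP (l u : ℝ) (m : ℕ) : ℝ := l ^ m + u ^ m
def AK (l u w : ℝ) (m : ℕ) : ℝ := w * PP l u m / (2 * DD l u m)
def BK (l u w : ℝ) (m : ℕ) : ℝ := 2 * w / DD l u m
def CK (l u w : ℝ) (m : ℕ) : ℝ := Real.pi ^ (-(1:ℝ)/2) * Real.sqrt (w / DD l u m)

lemma DD_pos {l u : ℝ} (hl : 1 < l) (hu0 : 0 < u) (hlu : l * u = 1)
    (m : ℕ) (hm : 1 ≤ m) : 0 < DD l u m := by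
  have hu1 : u < 1 := by nlinarith
  have : u ^ m < l ^ m := pow_lt_pow_left₀ (by linarith) hu0.le (by omega)
  simpa [DD, sub_pos] using this

lemma PP_pos {l u : ℝ} (hl : 1 < l) (hu0 : 0 < u) (m : ℕ) : 0 < PP l u m := by
  have h1 : (0:ℝ) < l ^ m := pow_pos (by linarith) m
  have h2 : (0:ℝ) < u ^ m := pow_pos hu0 m
  unfold PP; positivity

lemma AK_pos {l u w : ℝ} (hl : 1 < l) (hu0 : 0 < u) (hlu : l * u = 1) (hw : 0 < w)
    (m : ℕ) (hm : 1 ≤ m) : 0 < AK l u w m := by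
  have h1 := DD_pos hl hu0 hlu m hm
  have h2 := PP_pos hl hu0 m
  unfold AK; positivity

lemma S_val {l u w : ℝ} (hl : 1 < l) (hu0 : 0 < u) (hlu : l * u = 1)
    (m : ℕ) (hm : 1 ≤ m) :
    AK l u w 1 + AK l u w m = w * DD l u (m+1) / (DD l u 1 * DD l u m) := by
  have h1 := (DD_pos hl hu0 hlu 1 le_rfl).ne'
  have hm1 := (DD_pos hl hu0 hlu m hm).ne'
  have idD : PP l u 1 * DD l u m + PP l u m * DD l u 1 = 2 * DD l u (m+1) := by
    simp only [DD, PP, pow_succ, pow_one]; ring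
  unfold AK
  field_simp
  linear_combination w * idD

lemma invariant {l u w : ℝ} (hl : 1 < l) (hu0 : 0 < u) (hlu : l * u = 1) (hw : 0 < w)
    (m : ℕ) (hm : 1 ≤ m) : 4 * AK l u w m ^ 2 = BK l u w m ^ 2 + w ^ 2 := by
  have hm1 := (DD_pos hl hu0 hlu m hm).ne'
  have idI : PP l u m ^ 2 - DD l u m ^ 2 = 4 * (l * u) ^ m := by
    simp only [DD, PP, mul_pow]; ring
  rw [hlu, one_pow] at idI
  unfold AK BK
  field_simp
  linear_combination 4 * idI

lemma hb_ineq {l u w : ℝ} (hl : 1 < l) (hu0 : 0 < u) (hlu : l * u = 1) (hw : 0 < w)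
    (m : ℕ) (hm : 1 ≤ m) :
    BK l u w m ^ 2 < 4 * (AK l u w 1 + AK l u w m) * AK l u w m := by
  have h1 := AK_pos hl hu0 hlu hw 1 le_rfl
  have h2 := AK_pos hl hu0 hlu hw m hm
  have h3 := invariant hl hu0 hlu hw m hm
  nlinarith [mul_pos h1 h2]

lemma comp_A1 {l u w : ℝ} (hl : 1 < l) (hu0 : 0 < u) (hlu : l * u = 1) (hw : 0 < w)
    (m : ℕ) (hm : 1 ≤ m) :
    AK l u w 1 - BK l u w 1 ^ 2 / (4 * (AK l u w 1 + AK l u w m)) = AK l u w (m+1) := by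
  have h1 := (DD_pos hl hu0 hlu 1 le_rfl).ne'
  have hm1 := (DD_pos hl hu0 hlu m hm).ne'
  have hm2 := (DD_pos hl hu0 hlu (m+1) (by omega)).ne'
  have hwne := hw.ne'
  rw [S_val hl hu0 hlu m hm]
  have idA1 : PP l u 1 * DD l u (m+1) = DD l u 1 * PP l u (m+1) + 2 * (l*u) * DD l u m := by
    simp only [DD, PP, pow_succ, pow_one]; ring
  rw [hlu] at idA1
  unfold AK BK
  field_simp
  linear_combination 4 * idA1

lemma comp_A2 {l u w : ℝ} (hl : 1 < l) (hu0 : 0 < u) (hlu : l * u = 1) (hw : 0 < w)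
    (m : ℕ) (hm : 1 ≤ m) :
    AK l u w m - BK l u w m ^ 2 / (4 * (AK l u w 1 + AK l u w m)) = AK l u w (m+1) := by
  have h1 := (DD_pos hl hu0 hlu 1 le_rfl).ne'
  have hm1 := (DD_pos hl hu0 hlu m hm).ne'
  have hm2 := (DD_pos hl hu0 hlu (m+1) (by omega)).ne'
  have hwne := hw.ne'
  rw [S_val hl hu0 hlu m hm]
  have idA2 : PP l u m * DD l u (m+1) = DD l u m * PP l u (m+1) + 2 * (l*u) ^ m * DD l u 1 := by
    simp only [DD, PP, pow_succ, pow_one]; ring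
  rw [hlu, one_pow] at idA2
  unfold AK BK
  field_simp
  linear_combination 4 * idA2

lemma comp_B {l u w : ℝ} (hl : 1 < l) (hu0 : 0 < u) (hlu : l * u = 1) (hw : 0 < w)
    (m : ℕ) (hm : 1 ≤ m) :
    BK l u w 1 * BK l u w m / (2 * (AK l u w 1 + AK l u w m)) = BK l u w (m+1) := by
  have h1 := (DD_pos hl hu0 hlu 1 le_rfl).ne'
  have hm1 := (DD_pos hl hu0 hlu m hm).ne'
  have hm2 := (DD_pos hl hu0 hlu (m+1) (by omega)).ne'
  have hwne := hw.ne'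
  rw [S_val hl hu0 hlu m hm]
  unfold BK
  field_simp

lemma comp_C {l u w : ℝ} (hl : 1 < l) (hu0 : 0 < u) (hlu : l * u = 1) (hw : 0 < w)
    (m : ℕ) (hm : 1 ≤ m) :
    CK l u w 1 * CK l u w m * Real.sqrt (π / (AK l u w 1 + AK l u w m)) = CK l u w (m+1) := by
  have h1 := DD_pos hl hu0 hlu 1 le_rfl
  have hm1 := DD_pos hl hu0 hlu m hm
  have hm2 := DD_pos hl hu0 hlu (m+1) (by omega)
  rw [S_val hl hu0 hlu m hm]
  unfold CK
  have harg : w / DD l u 1 * (w / DD l u m) * (π / (w * DD l u (m+1) / (DD l u 1 * DD l u m)))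
      = π * (w / DD l u (m+1)) := by
    field_simp
  have e1 : Real.sqrt (w / DD l u 1) * Real.sqrt (w / DD l u m) *
      Real.sqrt (π / (w * DD l u (m+1) / (DD l u 1 * DD l u m)))
      = Real.sqrt π * Real.sqrt (w / DD l u (m+1)) := by
    rw [← Real.sqrt_mul (by positivity) (w / DD l u m), ← Real.sqrt_mul (by positivity),
      harg, Real.sqrt_mul pi_pos.le]
  have hpi : Real.pi ^ (-(1:ℝ)/2) * Real.pi ^ (-(1:ℝ)/2) * Real.sqrt π
      = Real.pi ^ (-(1:ℝ)/2) := by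
    rw [Real.sqrt_eq_rpow, ← Real.rpow_add pi_pos, ← Real.rpow_add pi_pos]
    norm_num
  calc Real.pi ^ (-(1:ℝ)/2) * Real.sqrt (w / DD l u 1) *
        (Real.pi ^ (-(1:ℝ)/2) * Real.sqrt (w / DD l u m)) *
        Real.sqrt (π / (w * DD l u (m+1) / (DD l u 1 * DD l u m)))
      = Real.pi ^ (-(1:ℝ)/2) * Real.pi ^ (-(1:ℝ)/2) *
        (Real.sqrt (w / DD l u 1) * Real.sqrt (w / DD l u m) *
          Real.sqrt (π / (w * DD l u (m+1) / (DD l u 1 * DD l u m)))) := by ring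
    _ = Real.pi ^ (-(1:ℝ)/2) * Real.pi ^ (-(1:ℝ)/2) * Real.sqrt π *
          Real.sqrt (w / DD l u (m+1)) := by rw [e1]; ring
    _ = Real.pi ^ (-(1:ℝ)/2) * Real.sqrt (w / DD l u (m+1)) := by rw [hpi]

/-- If `Vop` is the bounded multiplication operator by `e^{-(t/n)x²/4}` on `L²(ℝ)`
(that is, `e^{-(t/n)V/2}` with `V(x) = x²/2`) and `Pop` is convolution with the heat
kernel `p_{t/n}(x) = (2π(t/n))^{-1/2} e^{-x²/(2(t/n))}` (that is, `e^{-(t/n)H₀}` with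
`H₀ = -½ d²/dx²`), then `K(t/n)^n = (Vop ∘ Pop ∘ Vop)^n` is the integral operator
with kernel `K_n(t,·,·)`. -/
theorem trotter_power_eq_integral_operator (n : ℕ) (hn : 1 ≤ n) (t : ℝ) (ht : 0 < t)
    (Vop Pop : L2 →L[ℂ] L2)
    (hV : ∀ f : L2, ⇑(Vop f) =ᵐ[volume]
      fun x : ℝ => (Real.exp (-(t / n) * x ^ 2 / 4) : ℂ) * f x)
    (hP : ∀ f : L2, ⇑(Pop f) =ᵐ[volume]
      fun x : ℝ => ∫ y : ℝ,
        (((2 * Real.pi * (t / n)) ^ (-(1 : ℝ) / 2) *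
          Real.exp (-(x - y) ^ 2 / (2 * (t / n))) : ℝ) : ℂ) * f y)
    (f : L2) :
    ⇑((((Vop * Pop * Vop)) ^ n) f) =ᵐ[volume]
      fun x : ℝ => ∫ y : ℝ, (Kn n t x y : ℂ) * f y := by
  have hn0 : (0:ℝ) < n := by exact_mod_cast hn
  set τ : ℝ := t / (n:ℝ) with hτdef
  have hτ : 0 < τ := div_pos ht hn0
  set w : ℝ := Real.sqrt (1 + τ^2/4) with hwdef
  have hw2 : w ^ 2 = 1 + τ^2/4 := Real.sq_sqrt (by positivity)
  have hw : 0 < w := Real.sqrt_pos.mpr (by positivity)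
  set l : ℝ := 1 + τ * w + τ^2/2 with hldef
  set u : ℝ := 1 - τ * w + τ^2/2 with hudef
  have hl : 1 < l := by rw [hldef]; nlinarith
  have hlu : l * u = 1 := by rw [hldef, hudef]; nlinarith [hw2]
  have hu0 : 0 < u := by nlinarith
  have hD1 : DD l u 1 = 2 * (τ * w) := by simp [DD, hldef, hudef]; ring
  have hP1 : PP l u 1 = 2 + τ^2 := by simp [PP, hldef, hudef]; ring
  have hAK1 : AK l u w 1 = (2 + τ^2) / (4 * τ) := by
    rw [AK, hD1, hP1]
    field_simp
    ring
  have hBK1 : BK l u w 1 = 1 / τ := by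
    rw [BK, hD1]
    field_simp
  have hC1 : ((2 * Real.pi * τ) ^ (-(1:ℝ)/2) : ℝ) = CK l u w 1 := by
    rw [CK, hD1]
    have h1 : w / (2 * (τ * w)) = 1 / (2 * τ) := by field_simp
    rw [h1]
    have h2 : Real.pi ^ (-(1:ℝ)/2) = (Real.sqrt π)⁻¹ := by
      rw [show (-(1:ℝ)/2) = -(1/2 : ℝ) by norm_num, Real.rpow_neg pi_pos.le,
        ← Real.sqrt_eq_rpow]
    have h3 : ((2 * Real.pi * τ) : ℝ) ^ (-(1:ℝ)/2) = (Real.sqrt (2 * Real.pi * τ))⁻¹ := by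
      rw [show (-(1:ℝ)/2) = -(1/2 : ℝ) by norm_num, Real.rpow_neg (by positivity),
        ← Real.sqrt_eq_rpow]
    rw [h3, h2, one_div, Real.sqrt_inv, ← mul_inv, ← Real.sqrt_mul pi_pos.le,
      show Real.pi * (2 * τ) = 2 * Real.pi * τ by ring]
  set Kop : L2 →L[ℂ] L2 := Vop * Pop * Vop with hKopdef
  -- base case
  have hbase : ∀ g : L2, ⇑(Kop g) =ᵐ[volume] fun x : ℝ => ∫ y : ℝ,
      (↑(CK l u w 1 * Real.exp (-AK l u w 1 * (x^2+y^2) + BK l u w 1 * x * y)) : ℂ) * g y := by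
    intro g
    have h1 := hV g
    have h2 : ⇑(Pop (Vop g)) =ᵐ[volume] fun x : ℝ => ∫ y : ℝ,
        (((2 * Real.pi * τ) ^ (-(1:ℝ)/2) * Real.exp (-(x - y)^2 / (2*τ)) : ℝ) : ℂ) *
          ((Real.exp (-τ * y^2 / 4) : ℂ) * g y) := by
      refine (hP (Vop g)).trans ?_
      refine Filter.Eventually.of_forall fun x => ?_
      exact integral_congr_ae (h1.mono fun y hy => by dsimp only; rw [hy])
    have h3 : ⇑(Vop (Pop (Vop g))) =ᵐ[volume] fun x : ℝ =>
        (Real.exp (-τ * x^2/4) : ℂ) * ∫ y : ℝ,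
          (((2 * Real.pi * τ) ^ (-(1:ℝ)/2) * Real.exp (-(x - y)^2 / (2*τ)) : ℝ) : ℂ) *
            ((Real.exp (-τ * y^2 / 4) : ℂ) * g y) :=
      (hV _).trans (h2.mono fun x hx => by dsimp only; rw [hx])
    have hKg : ⇑(Kop g) = ⇑(Vop (Pop (Vop g))) := rfl
    rw [hKg]
    refine h3.trans (Filter.Eventually.of_forall fun x => ?_)
    dsimp only
    rw [← MeasureTheory.integral_const_mul]
    refine integral_congr_ae (Filter.Eventually.of_forall fun y => ?_)
    dsimp only
    have hexpid : Real.exp (-τ * x^2/4) *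
        ((2 * Real.pi * τ) ^ (-(1:ℝ)/2) * Real.exp (-(x - y)^2 / (2*τ))) *
        Real.exp (-τ * y^2 / 4)
        = CK l u w 1 * Real.exp (-AK l u w 1 * (x^2+y^2) + BK l u w 1 * x * y) := by
      rw [hAK1, hBK1, ← hC1]
      have hexp : Real.exp (-τ * x^2/4) * Real.exp (-(x - y)^2 / (2*τ)) *
          Real.exp (-τ * y^2 / 4)
          = Real.exp (-((2 + τ^2) / (4 * τ)) * (x^2+y^2) + (1/τ) * x * y) := by
        rw [← Real.exp_add, ← Real.exp_add]
        congr 1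
        field_simp
        ring
      linear_combination ((2 * Real.pi * τ) ^ (-(1:ℝ)/2)) * hexp
    calc (Real.exp (-τ * x^2/4) : ℂ) *
          ((((2 * Real.pi * τ) ^ (-(1:ℝ)/2) * Real.exp (-(x - y)^2 / (2*τ)) : ℝ) : ℂ) *
            ((Real.exp (-τ * y^2 / 4) : ℂ) * g y))
        = ↑(Real.exp (-τ * x^2/4) *
            ((2 * Real.pi * τ) ^ (-(1:ℝ)/2) * Real.exp (-(x - y)^2 / (2*τ))) *
            Real.exp (-τ * y^2 / 4)) * g y := by push_cast; ring
      _ = _ := by rw [hexpid]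
  -- induction
  have key : ∀ m : ℕ, 1 ≤ m → ∀ g : L2, ⇑((Kop ^ m) g) =ᵐ[volume] fun x : ℝ => ∫ y : ℝ,
      (↑(CK l u w m * Real.exp (-AK l u w m * (x^2+y^2) + BK l u w m * x * y)) : ℂ) * g y := by
    intro m hm
    induction m, hm using Nat.le_induction with
    | base => intro g; rw [pow_one]; exact hbase g
    | succ m hm ih =>
      intro g
      have e0 : (Kop ^ (m+1)) g = Kop ((Kop ^ m) g) := by rw [pow_succ']; rfl
      rw [e0]
      refine (hbase _).trans (Filter.Eventually.of_forall fun x => ?_)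
      dsimp only
      have ihg := ih g
      have hA1p := AK_pos hl hu0 hlu hw 1 le_rfl
      have hAmp := AK_pos hl hu0 hlu hw m hm
      have hbineq := hb_ineq hl hu0 hlu hw m hm
      calc (∫ y : ℝ, (↑(CK l u w 1 * Real.exp (-AK l u w 1 * (x^2+y^2)
              + BK l u w 1 * x * y)) : ℂ) * ((Kop ^ m) g) y)
          = ∫ y : ℝ, (↑(CK l u w 1 * Real.exp (-AK l u w 1 * (x^2+y^2)
              + BK l u w 1 * x * y)) : ℂ) *
              ∫ z : ℝ, (↑(CK l u w m * Real.exp (-AK l u w m * (y^2+z^2)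
                + BK l u w m * y * z)) : ℂ) * g z := by
            refine integral_congr_ae (ihg.mono fun y hy => ?_)
            dsimp only
            rw [hy]
        _ = ∫ z : ℝ, (↑(CK l u w 1 * CK l u w m *
              Real.sqrt (π / (AK l u w 1 + AK l u w m)) *
              Real.exp (-(AK l u w 1 - BK l u w 1 ^ 2 / (4 * (AK l u w 1 + AK l u w m))) * x^2
                - (AK l u w m - BK l u w m ^ 2 / (4 * (AK l u w 1 + AK l u w m))) * z^2
                + (BK l u w 1 * BK l u w m / (2 * (AK l u w 1 + AK l u w m))) * x * z)) : ℂ)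
              * g z :=
            gauss_step (AK l u w 1) (BK l u w 1) (CK l u w 1) (AK l u w m) (BK l u w m)
              (CK l u w m) x hA1p hAmp hbineq (⇑g) (Lp.memLp g)
        _ = ∫ z : ℝ, (↑(CK l u w (m+1) * Real.exp (-AK l u w (m+1) * (x^2+z^2)
              + BK l u w (m+1) * x * z)) : ℂ) * g z := by
            refine integral_congr_ae (Filter.Eventually.of_forall fun z => ?_)
            dsimp only
            have ha1 := comp_A1 hl hu0 hlu hw m hm
            have ha2 := comp_A2 hl hu0 hlu hw m hm
            have hb3 := comp_B hl hu0 hlu hw m hm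
            have hexpE : (-(AK l u w 1 - BK l u w 1 ^ 2 / (4 * (AK l u w 1 + AK l u w m))) * x^2
                - (AK l u w m - BK l u w m ^ 2 / (4 * (AK l u w 1 + AK l u w m))) * z^2
                + (BK l u w 1 * BK l u w m / (2 * (AK l u w 1 + AK l u w m))) * x * z)
                = -AK l u w (m+1) * (x^2+z^2) + BK l u w (m+1) * x * z := by
              linear_combination (-(x^2)) * ha1 + (-(z^2)) * ha2 + (x*z) * hb3
            rw [comp_C hl hu0 hlu hw m hm, hexpE]
  -- final kernel conversion
  have hwn : wn n t = w := by
    rw [wn, hwdef, hτdef]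
    congr 1
    field_simp
  have hbl : 1 + (t/(n:ℝ)) * wn n t + t^2/(2*(n:ℝ)^2) = l := by
    rw [hwn, hldef, ← hτdef, hτdef]
    congr 1
    field_simp
  have hbu : 1 - (t/(n:ℝ)) * wn n t + t^2/(2*(n:ℝ)^2) = u := by
    rw [hwn, hudef, ← hτdef, hτdef]
    have : t^2/(2*(n:ℝ)^2) = (t/(n:ℝ))^2/2 := by field_simp
    rw [this]
  have han : an n t = l ^ n := by rw [an, hbl]
  have hbn : bn n t = u ^ n := by rw [bn, hbu]
  have han' : an' n t = l ^ (n-1) := by rw [an', hbl]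
  have hbn' : bn' n t = u ^ (n-1) := by rw [bn', hbu]
  have hDn : an n t - bn n t = DD l u n := by rw [han, hbn]; rfl
  have hDn' : an' n t - bn' n t = DD l u (n-1) := by rw [han', hbn']; rfl
  obtain ⟨k, hk⟩ : ∃ k, n = k + 1 := ⟨n - 1, by omega⟩
  have hcoef : -t / (4 * (n:ℝ)) - ((n:ℝ)/(2*t)) * (1 - DD l u (n-1) / DD l u n)
      = -AK l u w n := by
    have hDnpos := DD_pos hl hu0 hlu n hn
    have e1 : -t / (4 * (n:ℝ)) = -τ/4 := by
      rw [hτdef]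
      field_simp
    have e2 : ((n:ℝ)/(2*t)) = 1/(2*τ) := by
      rw [hτdef]
      field_simp
    have idK : DD l u 1 * PP l u n = PP l u 1 * DD l u n - 2 * (l*u) * DD l u (n-1) := by
      subst hk
      simp only [DD, PP, pow_succ, pow_one, Nat.add_sub_cancel]
      ring
    rw [hlu, hD1, hP1] at idK
    rw [e1, e2, AK]
    field_simp
    rw [hτdef] at idK
    linear_combination 2 * idK
  have hKn : ∀ x y : ℝ, Kn n t x y
      = CK l u w n * Real.exp (-AK l u w n * (x^2+y^2) + BK l u w n * x * y) := by
    intro x y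
    rw [Kn, hwn, hDn, hDn', hcoef, CK, BK]
    rw [mul_assoc, ← Real.exp_add]
    congr 1
    ring
  refine (key n hn f).trans (Filter.Eventually.of_forall fun x => ?_)
  dsimp only
  refine integral_congr_ae (Filter.Eventually.of_forall fun y => ?_)
  dsimp only
  rw [hKn x y]
end
end

section
/- Let 𝒜 be a unital complex Banach algebra, let A, B ∈ 𝒜 and let L > 0. Then there exists a constant C > 0 such that for every integer n ≥ 1 and every t ∈ [−L, L], ‖(exp(tB/(2n))·exp(tA/n)·exp(tB/(2n)))^n − exp(t(A+B))‖ ≤ C/n². -/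
noncomputable section
open NormedSpace

set_option linter.unusedSectionVars false
set_option maxHeartbeats 1000000

section TrotterCore
variable {𝒜 : Type*} [NormedRing 𝒜] [NormOneClass 𝒜] [NormedAlgebra ℂ 𝒜] [CompleteSpace 𝒜]

def P3 (w : 𝒜) : 𝒜 := ∑ k ∈ Finset.range 3, ((k.factorial : ℂ))⁻¹ • w ^ k

lemma term_norm_le (w : 𝒜) (k : ℕ) :
    ‖((k.factorial : ℂ))⁻¹ • w ^ k‖ ≤ ‖w‖ ^ k / k.factorial := by
  rw [norm_smul, norm_inv]
  rw [div_eq_inv_mul]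
  have h1 : ‖((k.factorial : ℕ) : ℂ)‖ = (k.factorial : ℝ) := by
    simp
  rw [h1]
  exact mul_le_mul_of_nonneg_left (norm_pow_le w k) (by positivity)

lemma norm_exp_le' (x : 𝒜) : ‖exp x‖ ≤ Real.exp ‖x‖ := by
  rw [exp_eq_tsum ℂ]
  refine le_trans (norm_tsum_le_tsum_norm (norm_expSeries_summable' x)) ?_
  rw [Real.exp_eq_exp_ℝ, exp_eq_tsum_div]
  exact Summable.tsum_le_tsum (term_norm_le x) (norm_expSeries_summable' x)
    (Real.summable_pow_div_factorial ‖x‖)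

lemma norm_P3_le (w : 𝒜) : ‖P3 w‖ ≤ Real.exp ‖w‖ := by
  refine le_trans (norm_sum_le _ _) ?_
  refine le_trans (Finset.sum_le_sum fun k _ => term_norm_le w k) ?_
  rw [Real.exp_eq_exp_ℝ, exp_eq_tsum_div]
  exact Summable.sum_le_tsum _ (fun k _ => by positivity)
    (Real.summable_pow_div_factorial ‖w‖)

lemma norm_exp_sub_P3_le (x : 𝒜) : ‖exp x - P3 x‖ ≤ ‖x‖ ^ 3 * Real.exp ‖x‖ := by
  have hs : HasSum (fun n : ℕ => ((n.factorial : ℂ))⁻¹ • x ^ n) (exp x) :=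
    exp_series_hasSum_exp' x
  have h1 : HasSum (fun k : ℕ => (((k + 3).factorial : ℂ))⁻¹ • x ^ (k + 3))
      (exp x - P3 x) := (hasSum_nat_add_iff' 3).mpr hs
  have hb : ∀ k : ℕ, ‖(((k + 3).factorial : ℂ))⁻¹ • x ^ (k + 3)‖
      ≤ ‖x‖ ^ 3 * (‖x‖ ^ k / k.factorial) := by
    intro k
    refine le_trans (term_norm_le x (k + 3)) ?_
    calc ‖x‖ ^ (k + 3) / ((k + 3).factorial : ℝ) ≤ ‖x‖ ^ (k + 3) / (k.factorial : ℝ) := by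
          gcongr
          omega
      _ = ‖x‖ ^ 3 * (‖x‖ ^ k / k.factorial) := by
          rw [pow_add]; ring
  have hsum2 : Summable fun k : ℕ => ‖x‖ ^ 3 * (‖x‖ ^ k / k.factorial) :=
    (Real.summable_pow_div_factorial ‖x‖).mul_left _
  have hsum1 : Summable fun k : ℕ => ‖(((k + 3).factorial : ℂ))⁻¹ • x ^ (k + 3)‖ :=
    hsum2.of_nonneg_of_le (fun k => norm_nonneg _) hb
  rw [← h1.tsum_eq]
  refine le_trans (norm_tsum_le_tsum_norm hsum1) ?_
  refine le_trans (Summable.tsum_le_tsum hb hsum1 hsum2) ?_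
  rw [tsum_mul_left, Real.exp_eq_exp_ℝ, exp_eq_tsum_div]

lemma telescope (S T : 𝒜) (K ε : ℝ) (hK : 1 ≤ K) (hS : ‖S‖ ≤ K) (hT : ‖T‖ ≤ K)
    (hST : ‖S - T‖ ≤ ε) : ∀ n : ℕ, ‖S ^ (n + 1) - T ^ (n + 1)‖ ≤ (n + 1) * K ^ n * ε := by
  have hε : 0 ≤ ε := le_trans (norm_nonneg _) hST
  have hK0 : 0 ≤ K := le_trans zero_le_one hK
  intro n
  induction n with
  | zero => simpa using hST
  | succ m ih =>
    have hsplit : S ^ (m + 1 + 1) - T ^ (m + 1 + 1)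
        = S * (S ^ (m + 1) - T ^ (m + 1)) + (S - T) * T ^ (m + 1) := by
      rw [pow_succ' S (m + 1), pow_succ' T (m + 1), mul_sub, sub_mul]
      abel
    rw [hsplit]
    have hTp : ‖T ^ (m + 1)‖ ≤ K ^ (m + 1) :=
      le_trans (norm_pow_le _ _) (pow_le_pow_left₀ (norm_nonneg _) hT _)
    calc ‖S * (S ^ (m + 1) - T ^ (m + 1)) + (S - T) * T ^ (m + 1)‖
        ≤ ‖S * (S ^ (m + 1) - T ^ (m + 1))‖ + ‖(S - T) * T ^ (m + 1)‖ := norm_add_le _ _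
      _ ≤ ‖S‖ * ‖S ^ (m + 1) - T ^ (m + 1)‖ + ‖S - T‖ * ‖T ^ (m + 1)‖ := by
          gcongr <;> exact norm_mul_le _ _
      _ ≤ K * ((m + 1) * K ^ m * ε) + ε * K ^ (m + 1) := by
          gcongr
      _ = (m + 1 + 1) * K ^ (m + 1) * ε := by ring
      _ = ((m + 1 : ℕ) + 1) * K ^ (m + 1) * ε := by push_cast; ring

def strangE (h : ℂ) (x y : 𝒜) : 𝒜 :=
  (((1 : ℂ) / 4)) • (x * (x * (y)))
      + (((1 : ℂ) / 8)) • (x * (y * (y)))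
      + (((1 : ℂ) / 4)) • (y * (x * (x)))
      + (((1 : ℂ) / 4)) • (y * (x * (y)))
      + (((1 : ℂ) / 8)) • (y * (y * (x)))
      + (((1 : ℂ) / 8)) • (y * (y * (y)))
      + (h ^ 1 * ((1 : ℂ) / 16)) • (x * (x * (y * (y))))
      + (h ^ 1 * ((1 : ℂ) / 8)) • (y * (x * (x * (y))))
      + (h ^ 1 * ((1 : ℂ) / 16)) • (y * (x * (y * (y))))
      + (h ^ 1 * ((1 : ℂ) / 16)) • (y * (y * (x * (x))))
      + (h ^ 1 * ((1 : ℂ) / 16)) • (y * (y * (x * (y))))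
      + (h ^ 1 * ((1 : ℂ) / 64)) • (y * (y * (y * (y))))
      + (h ^ 2 * ((1 : ℂ) / 32)) • (y * (x * (x * (y * (y)))))
      + (h ^ 2 * ((1 : ℂ) / 32)) • (y * (y * (x * (x * (y)))))
      + (h ^ 2 * ((1 : ℂ) / 64)) • (y * (y * (x * (y * (y)))))
      + (h ^ 3 * ((1 : ℂ) / 128)) • (y * (y * (x * (x * (y * (y))))))

lemma strangE_key (h : ℂ) (x y : 𝒜) :
    P3 ((h / 2) • y) * P3 (h • x) * P3 ((h / 2) • y)
      = P3 (h • (x + y)) + h ^ 3 • strangE h x y := by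
  simp only [P3, strangE, Finset.sum_range_succ, Finset.sum_range_zero, zero_add,
    Nat.factorial, Nat.cast_one, Nat.cast_ofNat, inv_one, one_smul, smul_pow,
    pow_zero, pow_one, pow_succ, one_mul, Nat.mul_one, Nat.one_mul]
  simp only [mul_add, add_mul, smul_add, smul_mul_assoc, mul_smul_comm, smul_smul,
    one_mul, mul_one, mul_assoc]
  match_scalars <;> ring

theorem core_trotter (A B : 𝒜) (L : ℝ) (hL : 0 < L) :
    ∃ C : ℝ, 0 < C ∧ ∀ n : ℕ, 1 ≤ n → ∀ t ∈ Set.Icc (-L) L,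
      ‖(exp (((t : ℂ) / (2 * n)) • B) * exp (((t : ℂ) / n) • A)
            * exp (((t : ℂ) / (2 * n)) • B)) ^ n
          - exp ((t : ℂ) • (A + B))‖ ≤ C / (n : ℝ) ^ 2 := by
  have hconts : Continuous fun h : ℂ => strangE h A B := by
    unfold strangE; fun_prop
  obtain ⟨CE, hCE⟩ := (isCompact_closedBall (0 : ℂ) L).exists_bound_of_continuousOn
    hconts.continuousOn
  set m : ℝ := ‖A‖ + ‖B‖ with hm
  have hm0 : 0 ≤ m := by positivity
  set EB : ℝ := Real.exp (L * m) with hEBdef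
  have hEB0 : 0 < EB := Real.exp_pos _
  have hEB1 : 1 ≤ EB := Real.one_le_exp (by positivity)
  set C1 : ℝ := 3 * (m ^ 3 * EB ^ 3) + max CE 0 + m ^ 3 * EB + 1 with hC1def
  have hC10 : 0 < C1 := by positivity
  refine ⟨EB * C1 * L ^ 3, by positivity, ?_⟩
  intro n hn t ht
  obtain ⟨n', rfl⟩ : ∃ n', n = n' + 1 := ⟨n - 1, by omega⟩
  have hN1 : (1 : ℝ) ≤ ((n' + 1 : ℕ) : ℝ) := by exact_mod_cast hn
  have hN0 : (0 : ℝ) < ((n' + 1 : ℕ) : ℝ) := by positivity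
  have htL : |t| ≤ L := abs_le.mpr ⟨ht.1, ht.2⟩
  set h : ℂ := (t : ℂ) / ((n' + 1 : ℕ) : ℂ) with hhdef
  have hnormh : ‖h‖ = |t| / ((n' + 1 : ℕ) : ℝ) := by
    rw [hhdef, norm_div, Complex.norm_real, Real.norm_eq_abs, Complex.norm_natCast]
  have hhL : ‖h‖ ≤ L := by
    rw [hnormh]
    calc |t| / ((n' + 1 : ℕ) : ℝ) ≤ |t| / 1 := by gcongr
      _ = |t| := div_one _
      _ ≤ L := htL
  have hh0 : 0 ≤ ‖h‖ := norm_nonneg _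
  -- argument norms
  have hun : ‖(h / 2) • B‖ = ‖h‖ * (‖B‖ / 2) := by
    rw [norm_smul, norm_div]
    simp; ring
  have hvn : ‖h • A‖ = ‖h‖ * ‖A‖ := by rw [norm_smul]
  have hcn : ‖h • (A + B)‖ ≤ ‖h‖ * m := by
    rw [norm_smul, hm]
    exact mul_le_mul_of_nonneg_left (norm_add_le _ _) hh0
  have hum : ‖(h / 2) • B‖ ≤ ‖h‖ * m := by rw [hun, hm]; nlinarith [norm_nonneg A, norm_nonneg B]
  have hvm : ‖h • A‖ ≤ ‖h‖ * m := by rw [hvn, hm]; nlinarith [norm_nonneg B]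
  have hhmLm : ‖h‖ * m ≤ L * m := mul_le_mul_of_nonneg_right hhL hm0
  have hexpb : ∀ w : 𝒜, ‖w‖ ≤ ‖h‖ * m → ‖exp w‖ ≤ EB := fun w hw =>
    le_trans (norm_exp_le' w) (Real.exp_le_exp.mpr (le_trans hw hhmLm))
  have hP3b : ∀ w : 𝒜, ‖w‖ ≤ ‖h‖ * m → ‖P3 w‖ ≤ EB := fun w hw =>
    le_trans (norm_P3_le w) (Real.exp_le_exp.mpr (le_trans hw hhmLm))
  have hRb : ∀ w : 𝒜, ‖w‖ ≤ ‖h‖ * m → ‖exp w - P3 w‖ ≤ ‖h‖ ^ 3 * (m ^ 3 * EB) := by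
    intro w hw
    calc ‖exp w - P3 w‖ ≤ ‖w‖ ^ 3 * Real.exp ‖w‖ := norm_exp_sub_P3_le w
      _ ≤ (‖h‖ * m) ^ 3 * EB := by
          gcongr <;> first
            | exact hw
            | exact Real.exp_le_exp.mpr (le_trans hw hhmLm)
            | positivity
      _ = ‖h‖ ^ 3 * (m ^ 3 * EB) := by ring
  set u : 𝒜 := (h / 2) • B with hu
  set v : 𝒜 := h • A with hv
  set c : 𝒜 := h • (A + B) with hc
  set S : 𝒜 := exp u * exp v * exp u with hS
  set T : 𝒜 := exp c with hT
  -- local error estimate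
  have hid : h ^ 3 • strangE h A B = P3 u * P3 v * P3 u - P3 c := by
    rw [hu, hv, hc, strangE_key h A B]; abel
  have hsplit : S - T = (exp u - P3 u) * (exp v * exp u)
      + P3 u * ((exp v - P3 v) * exp u) + P3 u * (P3 v * (exp u - P3 u))
      + h ^ 3 • strangE h A B + (P3 c - T) := by
    rw [hid, hS]; noncomm_ring
  have hEbound : ‖strangE h A B‖ ≤ max CE 0 :=
    le_trans (hCE h (Metric.mem_closedBall.mpr (by simpa [dist_zero_right] using hhL)))
      (le_max_left _ _)
  have n1 : ‖(exp u - P3 u) * (exp v * exp u)‖ ≤ ‖h‖ ^ 3 * (m ^ 3 * EB) * (EB * EB) := by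
    refine le_trans (norm_mul_le _ _) ?_
    refine mul_le_mul (hRb u hum) (le_trans (norm_mul_le _ _) ?_) (norm_nonneg _) (by positivity)
    exact mul_le_mul (hexpb v hvm) (hexpb u hum) (norm_nonneg _) hEB0.le
  have n2 : ‖P3 u * ((exp v - P3 v) * exp u)‖ ≤ EB * (‖h‖ ^ 3 * (m ^ 3 * EB) * EB) := by
    refine le_trans (norm_mul_le _ _) ?_
    refine mul_le_mul (hP3b u hum) (le_trans (norm_mul_le _ _) ?_) (norm_nonneg _) hEB0.le
    exact mul_le_mul (hRb v hvm) (hexpb u hum) (norm_nonneg _) (by positivity)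
  have n3 : ‖P3 u * (P3 v * (exp u - P3 u))‖ ≤ EB * (EB * (‖h‖ ^ 3 * (m ^ 3 * EB))) := by
    refine le_trans (norm_mul_le _ _) ?_
    refine mul_le_mul (hP3b u hum) (le_trans (norm_mul_le _ _) ?_) (norm_nonneg _) hEB0.le
    exact mul_le_mul (hP3b v hvm) (hRb u hum) (norm_nonneg _) hEB0.le
  have n4 : ‖h ^ 3 • strangE h A B‖ ≤ ‖h‖ ^ 3 * max CE 0 := by
    rw [norm_smul, norm_pow]
    exact mul_le_mul_of_nonneg_left hEbound (by positivity)
  have n5 : ‖P3 c - T‖ ≤ ‖h‖ ^ 3 * (m ^ 3 * EB) := by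
    rw [norm_sub_rev]
    exact hRb c hcn
  have hloc : ‖S - T‖ ≤ ‖h‖ ^ 3 * C1 := by
    rw [hsplit]
    calc ‖(exp u - P3 u) * (exp v * exp u)
          + P3 u * ((exp v - P3 v) * exp u) + P3 u * (P3 v * (exp u - P3 u))
          + h ^ 3 • strangE h A B + (P3 c - T)‖
        ≤ ‖(exp u - P3 u) * (exp v * exp u)‖
          + ‖P3 u * ((exp v - P3 v) * exp u)‖ + ‖P3 u * (P3 v * (exp u - P3 u))‖
          + ‖h ^ 3 • strangE h A B‖ + ‖P3 c - T‖ := by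
          refine le_trans (norm_add_le _ _) (add_le_add ?_ le_rfl)
          refine le_trans (norm_add_le _ _) (add_le_add ?_ le_rfl)
          refine le_trans (norm_add_le _ _) (add_le_add ?_ le_rfl)
          exact norm_add_le _ _
      _ ≤ ‖h‖ ^ 3 * (m ^ 3 * EB) * (EB * EB) + EB * (‖h‖ ^ 3 * (m ^ 3 * EB) * EB)
          + EB * (EB * (‖h‖ ^ 3 * (m ^ 3 * EB))) + ‖h‖ ^ 3 * max CE 0
          + ‖h‖ ^ 3 * (m ^ 3 * EB) :=
          add_le_add (add_le_add (add_le_add (add_le_add n1 n2) n3) n4) n5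
      _ ≤ ‖h‖ ^ 3 * C1 := by
          rw [hC1def]
          nlinarith [pow_nonneg hh0 3, hEB0.le, hm0, le_max_right CE (0:ℝ),
            mul_nonneg (pow_nonneg hm0 3) hEB0.le]
  -- global bounds
  have hSb : ‖S‖ ≤ Real.exp (‖h‖ * m) := by
    rw [hS]
    calc ‖exp u * exp v * exp u‖ ≤ ‖exp u * exp v‖ * ‖exp u‖ := norm_mul_le _ _
      _ ≤ ‖exp u‖ * ‖exp v‖ * ‖exp u‖ := by
          exact mul_le_mul_of_nonneg_right (norm_mul_le _ _) (norm_nonneg _)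
      _ ≤ Real.exp ‖u‖ * Real.exp ‖v‖ * Real.exp ‖u‖ := by
          refine mul_le_mul (mul_le_mul (norm_exp_le' u) (norm_exp_le' v) (norm_nonneg _)
            (Real.exp_pos _).le) (norm_exp_le' u) (norm_nonneg _) (by positivity)
      _ = Real.exp (‖u‖ + ‖v‖ + ‖u‖) := by rw [Real.exp_add, Real.exp_add]
      _ ≤ Real.exp (‖h‖ * m) := by
          refine Real.exp_le_exp.mpr (le_of_eq ?_)
          rw [hun, hvn, hm]; ring
  have hTb : ‖T‖ ≤ Real.exp (‖h‖ * m) :=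
    le_trans (norm_exp_le' c) (Real.exp_le_exp.mpr hcn)
  have hKpow : Real.exp (‖h‖ * m) ^ n' ≤ EB := by
    rw [← Real.exp_nat_mul, hEBdef]
    refine Real.exp_le_exp.mpr ?_
    have h1 : (n' : ℝ) * ‖h‖ ≤ L := by
      rw [hnormh]
      rw [div_eq_inv_mul, ← mul_assoc]
      calc (n' : ℝ) * (((n' + 1 : ℕ) : ℝ))⁻¹ * |t| ≤ 1 * |t| := by
            refine mul_le_mul_of_nonneg_right ?_ (abs_nonneg t)
            rw [← div_eq_mul_inv, div_le_one hN0]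
            push_cast; linarith
        _ ≤ L := by rwa [one_mul]
    nlinarith [hh0, mul_nonneg (Nat.cast_nonneg' n' : (0:ℝ) ≤ n') hh0]
  have hmain := telescope S T (Real.exp (‖h‖ * m)) (‖h‖ ^ 3 * C1)
    (Real.one_le_exp (by positivity)) hSb hTb hloc n'
  -- identify with the goal
  have hTn : T ^ (n' + 1) = exp ((t : ℂ) • (A + B)) := by
    letI : NormedAlgebra ℚ 𝒜 := .restrictScalars ℚ ℂ 𝒜
    rw [hT, hc, ← exp_nsmul]
    congr 1
    rw [← Nat.cast_smul_eq_nsmul ℂ, smul_smul]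
    congr 1
    rw [hhdef]
    have hne : ((n' : ℂ) + 1) ≠ 0 := Nat.cast_add_one_ne_zero n'
    push_cast
    field_simp
  have hh2 : (t : ℂ) / (2 * ((n' + 1 : ℕ) : ℂ)) = h / 2 := by rw [hhdef]; ring
  have hgoal : (exp (((t : ℂ) / (2 * ((n' + 1 : ℕ) : ℂ))) • B)
      * exp (((t : ℂ) / ((n' + 1 : ℕ) : ℂ)) • A)
      * exp (((t : ℂ) / (2 * ((n' + 1 : ℕ) : ℂ))) • B)) ^ (n' + 1)
      - exp ((t : ℂ) • (A + B)) = S ^ (n' + 1) - T ^ (n' + 1) := by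
    rw [hTn, hS, hu, hv, hh2, hhdef]
  rw [hgoal]
  refine le_trans hmain ?_
  have hhLN : ‖h‖ ≤ L / ((n' + 1 : ℕ) : ℝ) := by
    rw [hnormh]; gcongr
  calc ((n' : ℝ) + 1) * Real.exp (‖h‖ * m) ^ n' * (‖h‖ ^ 3 * C1)
      ≤ ((n' : ℝ) + 1) * EB * ((L / ((n' + 1 : ℕ) : ℝ)) ^ 3 * C1) := by
        gcongr
      _ = EB * C1 * L ^ 3 / ((n' + 1 : ℕ) : ℝ) ^ 2 := by
        push_cast
        field_simp

end TrotterCore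

/-- Symmetric (Strang) Lie–Trotter product formula with error bound `O(1/n²)` for
two elements of a unital complex Banach algebra, uniformly on compact
`t`-intervals. -/
theorem trotter_symmetric_banach {𝒜 : Type*} [NormedRing 𝒜] [NormedAlgebra ℂ 𝒜]
    [CompleteSpace 𝒜] (A B : 𝒜) (L : ℝ) (hL : 0 < L) :
    ∃ C : ℝ, 0 < C ∧ ∀ n : ℕ, 1 ≤ n → ∀ t ∈ Set.Icc (-L) L,
      ‖(exp (((t : ℂ) / (2 * n)) • B) * exp (((t : ℂ) / n) • A)
            * exp (((t : ℂ) / (2 * n)) • B)) ^ n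
          - exp ((t : ℂ) • (A + B))‖ ≤ C / (n : ℝ) ^ 2 := by
  rcases subsingleton_or_nontrivial 𝒜 with hsub | hnt
  · refine ⟨1, one_pos, fun n hn t ht => ?_⟩
    have hz : (exp (((t : ℂ) / (2 * n)) • B) * exp (((t : ℂ) / n) • A)
        * exp (((t : ℂ) / (2 * n)) • B)) ^ n = exp ((t : ℂ) • (A + B)) :=
      Subsingleton.elim _ _
    rw [hz, sub_self, norm_zero]
    positivity
  · set φ : 𝒜 →L[ℂ] 𝒜 →L[ℂ] 𝒜 := ContinuousLinearMap.mul ℂ 𝒜 with hφ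
    have hψ1 : φ 1 = 1 := by
      ext z
      simp [hφ, ContinuousLinearMap.mul_apply']
    have hψm : ∀ x y : 𝒜, φ (x * y) = φ x * φ y := by
      intro x y
      ext z
      simp [hφ, ContinuousLinearMap.mul_apply', ContinuousLinearMap.mul_apply, mul_assoc]
    set ψ : 𝒜 →+* (𝒜 →L[ℂ] 𝒜) :=
      { toFun := φ, map_one' := hψ1, map_mul' := hψm,
        map_zero' := map_zero φ, map_add' := map_add φ } with hψ
    have hψc : Continuous ψ := φ.continuous
    have hψsm : ∀ (c : ℂ) (w : 𝒜), ψ (c • w) = c • ψ w := fun c w => map_smul φ c w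
    obtain ⟨C', hC'pos, hC'⟩ := core_trotter (ψ A) (ψ B) L hL
    have h1pos : (0 : ℝ) < ‖(1 : 𝒜)‖ := norm_pos_iff.mpr one_ne_zero
    refine ⟨‖(1 : 𝒜)‖ * C', by positivity, ?_⟩
    intro n hn t ht
    have hb := hC' n hn t ht
    set X : 𝒜 := (exp (((t : ℂ) / (2 * n)) • B) * exp (((t : ℂ) / n) • A)
        * exp (((t : ℂ) / (2 * n)) • B)) ^ n - exp ((t : ℂ) • (A + B)) with hX
    have hφX : ψ X = (exp (((t : ℂ) / (2 * n)) • ψ B) * exp (((t : ℂ) / n) • ψ A)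
        * exp (((t : ℂ) / (2 * n)) • ψ B)) ^ n - exp ((t : ℂ) • (ψ A + ψ B)) := by
      rw [hX, map_sub, map_pow, map_mul, map_mul]
      letI : NormedAlgebra ℚ 𝒜 := .restrictScalars ℚ ℂ 𝒜
      letI : NormedAlgebra ℚ (𝒜 →L[ℂ] 𝒜) := .restrictScalars ℚ ℂ (𝒜 →L[ℂ] 𝒜)
      simp only [map_exp ψ hψc, hψsm, map_add]
    have hXeq : X = φ X 1 := by
      rw [ContinuousLinearMap.mul_apply', mul_one]
    calc ‖X‖ = ‖φ X 1‖ := by rw [← hXeq]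
      _ ≤ ‖φ X‖ * ‖(1 : 𝒜)‖ := (φ X).le_opNorm 1
      _ = ‖ψ X‖ * ‖(1 : 𝒜)‖ := rfl
      _ ≤ C' / (n : ℝ) ^ 2 * ‖(1 : 𝒜)‖ := by
          refine mul_le_mul_of_nonneg_right ?_ (norm_nonneg _)
          rw [hφX]
          exact hb
      _ = ‖(1 : 𝒜)‖ * C' / (n : ℝ) ^ 2 := by ring
end
end

section
/- (Norm version of Chernoff's theorem with error bound, Part I, for bounded generator.) Let ℋ be a complex Hilbert space, let H be a bounded selfadjoint operator on ℋ with H ≥ 0, let T > 0, and let F : (0,T] → B(ℋ) be a family of selfadjoint operators with 0 ≤ F(t) ≤ 1 for all t ∈ (0,T]. For t ∈ (0,T] set S_t := t^{−1}(1 − F(t)), and note that 1 + S_t and 1 + H are invertible. Let 0 < α ≤ 1 and suppose there is K > 0 such that ‖(1 + S_t)^{−1} − (1 + H)^{−1}‖ ≤ K·t^α for all t ∈ (0,T]. Then for every δ > 0 there exists C > 0 such that for every t > 0 and every integer n ≥ 1 with t/n ∈ (0,T], ‖F(t/n)^n − exp(−tH)‖ ≤ C·δ^{−2}·t^{α−1}·e^{δt}·n^{−α}.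 -/
noncomputable section
open NormedSpace ContinuousLinearMap


/-! ### Scalar lemmas -/

private lemma xexp_le {u x : ℝ} (hu : 0 < u) (hx : 0 ≤ x) :
    x * Real.exp (-(u * x)) ≤ (Real.exp 1 * u)⁻¹ := by
  have h1 : u * x ≤ Real.exp (u * x - 1) := by
    have := Real.add_one_le_exp (u * x - 1); linarith
  have h2 : Real.exp (u * x - 1) * Real.exp (-(u * x)) = (Real.exp 1)⁻¹ := by
    rw [← Real.exp_add, ← Real.exp_neg]; ring_nf
  have hE : 0 < Real.exp (-(u * x)) := Real.exp_pos _
  have h3 : u * (x * Real.exp (-(u * x))) ≤ (Real.exp 1)⁻¹ := by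
    calc u * (x * Real.exp (-(u * x))) = (u * x) * Real.exp (-(u * x)) := by ring
    _ ≤ Real.exp (u * x - 1) * Real.exp (-(u * x)) := mul_le_mul_of_nonneg_right h1 hE.le
    _ = (Real.exp 1)⁻¹ := h2
  have he : 0 < Real.exp 1 := Real.exp_pos 1
  have h4 : x * Real.exp (-(u * x)) = u⁻¹ * (u * (x * Real.exp (-(u * x)))) := by
    field_simp
  rw [mul_inv, h4, mul_comm (Real.exp 1)⁻¹ u⁻¹]
  exact mul_le_mul_of_nonneg_left h3 (by positivity)

private lemma pow_succ_sub_le (a b : ℝ) (hb : 0 ≤ b) (hba : b ≤ a) :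
    ∀ n : ℕ, a ^ (n + 1) - b ^ (n + 1) ≤ (n + 1 : ℝ) * a ^ n * (a - b) := by
  have ha0 : 0 ≤ a := hb.trans hba
  intro n
  induction n with
  | zero => simp
  | succ n ih =>
    have h1 : b ^ (n + 1) ≤ a ^ (n + 1) := pow_le_pow_left₀ hb hba _
    calc a ^ (n + 1 + 1) - b ^ (n + 1 + 1)
        = a * (a ^ (n + 1) - b ^ (n + 1)) + (a - b) * b ^ (n + 1) := by ring
    _ ≤ a * ((n + 1 : ℝ) * a ^ n * (a - b)) + (a - b) * a ^ (n + 1) :=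
        add_le_add (mul_le_mul_of_nonneg_left ih ha0)
          (mul_le_mul_of_nonneg_left h1 (sub_nonneg.2 hba))
    _ = ((n + 1 : ℕ) + 1 : ℝ) * a ^ (n + 1) * (a - b) := by push_cast; ring

private lemma chernoff_scalar {n : ℕ} (hn : 1 ≤ n) {x : ℝ} (hx0 : 0 ≤ x) (hx1 : x ≤ 1) :
    |x ^ n - Real.exp (-((n : ℝ) * (1 - x)))| ≤ 16 / n := by
  set s : ℝ := 1 - x with hs
  have hs0 : 0 ≤ s := by rw [hs]; linarith
  have hs1 : s ≤ 1 := by rw [hs]; linarith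
  have hxe : x ≤ Real.exp (-s) := by
    have := Real.add_one_le_exp (-s); rw [hs] at *; linarith
  have hq : Real.exp (-s) - x ≤ s ^ 2 := by
    have h1pos : (0 : ℝ) < 1 + s := by linarith
    have hles : 1 + s ≤ Real.exp s := by have := Real.add_one_le_exp s; linarith
    have hinv : Real.exp (-s) ≤ (1 + s)⁻¹ := by
      rw [Real.exp_neg]
      exact inv_anti₀ h1pos hles
    have hmc : (1 + s) * (1 + s)⁻¹ = 1 := mul_inv_cancel₀ (ne_of_gt h1pos)
    have hx' : x = 1 - s := by rw [hs]; ring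
    nlinarith [hinv, hmc, sq_nonneg s, mul_pos h1pos h1pos]
  obtain ⟨m, rfl⟩ : ∃ m, n = m + 1 := ⟨n - 1, (Nat.succ_pred_eq_of_pos hn).symm⟩
  have hpowle : x ^ (m + 1) ≤ Real.exp (-s) ^ (m + 1) := pow_le_pow_left₀ hx0 hxe _
  have hexpn : ∀ k : ℕ, Real.exp (-s) ^ k = Real.exp (-((k : ℝ) * s)) := by
    intro k; rw [← Real.exp_nat_mul]; ring_nf
  have key := pow_succ_sub_le (Real.exp (-s)) x hx0 hxe m
  rw [← hexpn (m + 1), abs_sub_comm, abs_of_nonneg (sub_nonneg.2 hpowle)]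
  have hem : (0:ℝ) ≤ Real.exp (-s) ^ m := pow_nonneg (Real.exp_pos _).le m
  have step1 : Real.exp (-s) ^ (m + 1) - x ^ (m + 1)
      ≤ ((m : ℝ) + 1) * Real.exp (-s) ^ m * s ^ 2 := by
    calc Real.exp (-s) ^ (m + 1) - x ^ (m + 1)
        ≤ ((m : ℝ) + 1) * Real.exp (-s) ^ m * (Real.exp (-s) - x) := key
    _ ≤ ((m : ℝ) + 1) * Real.exp (-s) ^ m * s ^ 2 := by
        apply mul_le_mul_of_nonneg_left hq; positivity
  have hcast : ((m + 1 : ℕ) : ℝ) = (m : ℝ) + 1 := by push_cast; ring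
  rw [hcast]
  rcases Nat.eq_zero_or_pos m with hm0 | hm1
  · subst hm0
    simp only [Nat.cast_zero, pow_zero, mul_one, zero_add] at step1 ⊢
    nlinarith [step1, hs1, hs0]
  · have hm1' : (1:ℝ) ≤ (m:ℝ) := by exact_mod_cast hm1
    have hu2 : (0:ℝ) < (m:ℝ) / 2 := by linarith
    have he1 : (1:ℝ) ≤ Real.exp 1 := by have := Real.add_one_le_exp 1; linarith
    have hxx : s * Real.exp (-((m:ℝ) / 2 * s)) ≤ ((m:ℝ) / 2)⁻¹ := by
      calc s * Real.exp (-((m:ℝ)/2 * s)) ≤ (Real.exp 1 * ((m:ℝ)/2))⁻¹ := xexp_le hu2 hs0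
      _ ≤ (1 * ((m:ℝ)/2))⁻¹ := by
          apply inv_anti₀ (by linarith)
          apply mul_le_mul_of_nonneg_right he1 hu2.le
      _ = ((m:ℝ)/2)⁻¹ := by rw [one_mul]
    have hsplit : Real.exp (-s) ^ m
        = Real.exp (-((m:ℝ)/2 * s)) * Real.exp (-((m:ℝ)/2 * s)) := by
      rw [hexpn m, ← Real.exp_add]; ring_nf
    have step2 : Real.exp (-s) ^ m * s ^ 2 ≤ (((m:ℝ)/2)⁻¹) ^ 2 := by
      calc Real.exp (-s) ^ m * s ^ 2
          = (s * Real.exp (-((m:ℝ)/2 * s))) ^ 2 := by rw [hsplit]; ring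
      _ ≤ (((m:ℝ)/2)⁻¹) ^ 2 := by
          apply sq_le_sq' _ hxx
          have : 0 ≤ s * Real.exp (-((m:ℝ)/2 * s)) := by positivity
          have : 0 ≤ ((m:ℝ)/2)⁻¹ := by positivity
          linarith [mul_nonneg hs0 (Real.exp_pos (-((m:ℝ)/2 * s))).le]
    have hinv2 : (((m:ℝ)/2)⁻¹) ^ 2 = 4 / (m:ℝ)^2 := by
      rw [← one_div, div_pow, one_pow, div_pow]
      rw [div_div_eq_mul_div, one_mul]
      congr 1; ring
    have hfin : ((m:ℝ) + 1) * (4 / (m:ℝ)^2) ≤ 16 / ((m:ℝ) + 1) := by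
      rw [show ((m:ℝ) + 1) * (4 / (m:ℝ)^2) = (4 * ((m:ℝ)+1)) / (m:ℝ)^2 by ring]
      rw [div_le_div_iff₀ (by positivity) (by linarith)]
      nlinarith [hm1']
    calc Real.exp (-s) ^ (m + 1) - x ^ (m + 1)
        ≤ ((m : ℝ) + 1) * Real.exp (-s) ^ m * s ^ 2 := step1
    _ = ((m : ℝ) + 1) * (Real.exp (-s) ^ m * s ^ 2) := by ring
    _ ≤ ((m : ℝ) + 1) * (4 / (m:ℝ)^2) := by
        apply mul_le_mul_of_nonneg_left _ (by positivity)
        rw [← hinv2]; exact step2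
    _ ≤ 16 / ((m:ℝ) + 1) := hfin

section OpAux

variable {A : Type*} [CStarAlgebra A] [PartialOrder A] [StarOrderedRing A]

private lemma mem_spec_nonneg {a : A} (ha : 0 ≤ a) {x : ℝ} (hx : x ∈ spectrum ℝ a) : 0 ≤ x :=
  spectrum_nonneg_of_nonneg ha hx

private lemma norm_cfc_of_nonneg {a : A} (ha : 0 ≤ a) {f : ℝ → ℝ} {c : ℝ} (hc : 0 ≤ c)
    (h : ∀ x : ℝ, 0 ≤ x → |f x| ≤ c) : ‖cfc f a‖ ≤ c :=
  norm_cfc_le hc fun x hx => by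
    rw [Real.norm_eq_abs]; exact h x (mem_spec_nonneg ha hx)

private lemma exp_cfc {a : A} (ha : IsSelfAdjoint a) (u : ℝ) :
    exp ((-u) • a) = cfc (fun x : ℝ => Real.exp (-(u * x))) a := by
  rw [← CFC.real_exp_eq_normedSpace_exp (a := (-u) • a) (IsSelfAdjoint.smul (star_trivial (-u)) ha)]
  rw [← cfc_comp_smul (-u) Real.exp a Real.continuous_exp.continuousOn ha]
  refine cfc_congr fun x _ => ?_
  simp [smul_eq_mul]

private lemma cfc_affine {a : A} (ha : IsSelfAdjoint a) (δ : ℝ) :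
    cfc (fun x : ℝ => δ + x) a = δ • 1 + a := by
  rw [cfc_const_add δ (fun x : ℝ => x) a continuous_id.continuousOn ha, cfc_id' ℝ a ha,
    Algebra.algebraMap_eq_smul_one]

private lemma res_contOn {a : A} (ha : 0 ≤ a) {δ : ℝ} (hδ : 0 < δ) :
    ContinuousOn (fun x : ℝ => (δ + x)⁻¹) (spectrum ℝ a) := by
  apply ContinuousOn.inv₀ (by fun_prop)
  intro x hx
  have := mem_spec_nonneg ha hx
  positivity

private lemma res_mul_cancel {a : A} (ha : 0 ≤ a) {δ : ℝ} (hδ : 0 < δ) :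
    (δ • 1 + a) * cfc (fun x : ℝ => (δ + x)⁻¹) a = 1 ∧
      cfc (fun x : ℝ => (δ + x)⁻¹) a * (δ • 1 + a) = 1 := by
  have hsa : IsSelfAdjoint a := IsSelfAdjoint.of_nonneg ha
  have hca : ContinuousOn (fun x : ℝ => δ + x) (spectrum ℝ a) := by fun_prop
  have hci := res_contOn ha hδ
  constructor
  · rw [← cfc_affine hsa δ, ← cfc_mul _ _ a hca hci]
    calc cfc (fun x : ℝ => (δ + x) * (δ + x)⁻¹) a = cfc (fun _ : ℝ => (1:ℝ)) a := by
          refine cfc_congr fun x hx => ?_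
          have := mem_spec_nonneg ha hx
          exact mul_inv_cancel₀ (by positivity)
    _ = 1 := by rw [cfc_const 1 a hsa, map_one]
  · rw [← cfc_affine hsa δ, ← cfc_mul _ _ a hci hca]
    calc cfc (fun x : ℝ => (δ + x)⁻¹ * (δ + x)) a = cfc (fun _ : ℝ => (1:ℝ)) a := by
          refine cfc_congr fun x hx => ?_
          have := mem_spec_nonneg ha hx
          exact inv_mul_cancel₀ (by positivity)
    _ = 1 := by rw [cfc_const 1 a hsa, map_one]

private lemma ring_inverse_eq_of {u v : A} (h1 : u * v = 1) (h2 : v * u = 1) :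
    Ring.inverse u = v := by
  have hu : IsUnit u := ⟨⟨u, v, h1, h2⟩, rfl⟩
  calc Ring.inverse u = Ring.inverse u * (u * v) := by rw [h1, mul_one]
  _ = v := by rw [← mul_assoc, Ring.inverse_mul_cancel u hu, one_mul]

private lemma cfc_mul_comm' {a : A} (ha : IsSelfAdjoint a) {f g : ℝ → ℝ}
    (hf : ContinuousOn f (spectrum ℝ a)) (hg : ContinuousOn g (spectrum ℝ a)) :
    cfc f a * cfc g a = cfc g a * cfc f a := by
  rw [← cfc_mul f g a hf hg, ← cfc_mul g f a hg hf]
  exact cfc_congr fun x _ => mul_comm _ _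

private lemma cfc_comm_self {a : A} (ha : 0 ≤ a) {f : ℝ → ℝ}
    (hf : ContinuousOn f (spectrum ℝ a)) : cfc f a * a = a * cfc f a := by
  have hsa : IsSelfAdjoint a := IsSelfAdjoint.of_nonneg ha
  have h := cfc_mul_comm' hsa hf continuous_id.continuousOn
  rwa [cfc_id ℝ a hsa] at h

private lemma norm_exp_le_one' {a : A} (ha : 0 ≤ a) {u : ℝ} (hu : 0 ≤ u) :
    ‖exp ((-u) • a)‖ ≤ 1 := by
  rw [exp_cfc (IsSelfAdjoint.of_nonneg ha) u]
  apply norm_cfc_of_nonneg ha zero_le_one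
  intro x hx
  rw [abs_of_nonneg (Real.exp_pos _).le, ← Real.exp_zero]
  exact Real.exp_le_exp.2 (by nlinarith)

private lemma norm_exp_aff {a : A} (ha : 0 ≤ a) {δ u : ℝ} (hδ : 0 < δ) (hu : 0 < u) :
    ‖exp ((-u) • a) * (δ • 1 + a)‖ ≤ δ + (Real.exp 1 * u)⁻¹ := by
  have hsa : IsSelfAdjoint a := IsSelfAdjoint.of_nonneg ha
  have hce : ContinuousOn (fun x : ℝ => Real.exp (-(u * x))) (spectrum ℝ a) := by fun_prop
  have hca : ContinuousOn (fun x : ℝ => δ + x) (spectrum ℝ a) := by fun_prop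
  rw [exp_cfc hsa u, ← cfc_affine hsa δ, ← cfc_mul _ _ a hce hca]
  apply norm_cfc_of_nonneg ha (by positivity)
  intro x hx
  have h1 : Real.exp (-(u * x)) ≤ 1 := by
    rw [← Real.exp_zero]; exact Real.exp_le_exp.2 (by nlinarith)
  have h2 := xexp_le hu hx
  rw [abs_of_nonneg (by positivity)]
  calc Real.exp (-(u * x)) * (δ + x)
      = δ * Real.exp (-(u * x)) + x * Real.exp (-(u * x)) := by ring
  _ ≤ δ * 1 + (Real.exp 1 * u)⁻¹ :=
      add_le_add (mul_le_mul_of_nonneg_left h1 hδ.le) h2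
  _ = δ + (Real.exp 1 * u)⁻¹ := by ring

private lemma aff_exp_comm {a : A} (ha : 0 ≤ a) (δ u : ℝ) :
    (δ • 1 + a) * exp ((-u) • a) = exp ((-u) • a) * (δ • 1 + a) := by
  have hsa : IsSelfAdjoint a := IsSelfAdjoint.of_nonneg ha
  rw [exp_cfc hsa u, ← cfc_affine hsa δ]
  exact cfc_mul_comm' hsa (by fun_prop) (by fun_prop)

private lemma norm_aff_exp {a : A} (ha : 0 ≤ a) {δ u : ℝ} (hδ : 0 < δ) (hu : 0 < u) :
    ‖(δ • 1 + a) * exp ((-u) • a)‖ ≤ δ + (Real.exp 1 * u)⁻¹ := by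
  rw [aff_exp_comm ha δ u]
  exact norm_exp_aff ha hδ hu

private lemma res_diff_norm_le {a b : A} (ha : 0 ≤ a) (hb : 0 ≤ b) {δ : ℝ} (hδ : 0 < δ) :
    ‖cfc (fun x : ℝ => (δ + x)⁻¹) a - cfc (fun x : ℝ => (δ + x)⁻¹) b‖
      ≤ max 1 δ⁻¹ ^ 2 * ‖Ring.inverse (1 + a : A) - Ring.inverse (1 + b : A)‖ := by
  have hsa : IsSelfAdjoint a := IsSelfAdjoint.of_nonneg ha
  have hsb : IsSelfAdjoint b := IsSelfAdjoint.of_nonneg hb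
  set P := cfc (fun x : ℝ => (δ + x)⁻¹) a with hP
  set Q := cfc (fun x : ℝ => (δ + x)⁻¹) b with hQ
  obtain ⟨hPl, hPr⟩ := res_mul_cancel ha hδ
  obtain ⟨hQl, hQr⟩ := res_mul_cancel hb hδ
  obtain ⟨h1al, h1ar⟩ := res_mul_cancel ha one_pos
  obtain ⟨h1bl, h1br⟩ := res_mul_cancel hb one_pos
  rw [one_smul] at h1al h1ar h1bl h1br
  have hRA : Ring.inverse (1 + a : A) = cfc (fun x : ℝ => (1 + x)⁻¹) a :=
    ring_inverse_eq_of h1al h1ar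
  have hRB : Ring.inverse (1 + b : A) = cfc (fun x : ℝ => (1 + x)⁻¹) b :=
    ring_inverse_eq_of h1bl h1br
  set RA := Ring.inverse (1 + a : A) with hRAdef
  set RB := Ring.inverse (1 + b : A) with hRBdef
  have hfa : (1 + a) * RA = 1 := by rw [hRA]; exact h1al
  have hfb : RB * (1 + b) = 1 := by rw [hRB]; exact h1br
  have e0 : (1 + a) * (RA - RB) * (1 + b) = b - a := by
    calc (1 + a) * (RA - RB) * (1 + b)
        = ((1 + a) * RA) * (1 + b) - (1 + a) * (RB * (1 + b)) := by noncomm_ring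
    _ = (1 + b) - (1 + a) := by rw [hfa, hfb, one_mul, mul_one]
    _ = b - a := by abel
  have hID : P - Q = (P * (1 + a)) * (RA - RB) * ((1 + b) * Q) := by
    calc P - Q = P * ((δ • 1 + b) * Q) - (P * (δ • 1 + a)) * Q := by
          rw [hQl, hPr, mul_one, one_mul]
    _ = P * (b - a) * Q := by noncomm_ring
    _ = P * ((1 + a) * (RA - RB) * (1 + b)) * Q := by rw [e0]
    _ = (P * (1 + a)) * (RA - RB) * ((1 + b) * Q) := by noncomm_ring
  have hsc : ∀ x : ℝ, 0 ≤ x → |(δ + x)⁻¹ * (1 + x)| ≤ max 1 δ⁻¹ := by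
    intro x hx
    have hpos : (0:ℝ) < δ + x := by positivity
    rw [abs_of_nonneg (by positivity), ← div_eq_inv_mul, div_le_iff₀ hpos]
    rcases le_total δ 1 with h | h
    · have hmax : max 1 δ⁻¹ = δ⁻¹ := max_eq_right ((one_le_inv₀ hδ).2 h)
      rw [hmax]
      have hdd : δ⁻¹ * δ = 1 := inv_mul_cancel₀ (ne_of_gt hδ)
      have hinv1 : (1:ℝ) ≤ δ⁻¹ := (one_le_inv₀ hδ).2 h
      nlinarith [hdd, hinv1, hx]
    · have hmax : max 1 δ⁻¹ = 1 := max_eq_left ((inv_le_one₀ hδ).2 h)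
      rw [hmax]; linarith
  have hn1 : ‖P * (1 + a)‖ ≤ max 1 δ⁻¹ := by
    have h1a : (1 : A) + a = cfc (fun x : ℝ => 1 + x) a := by rw [cfc_affine hsa 1, one_smul]
    rw [hP, h1a, ← cfc_mul _ _ a (res_contOn ha hδ) (by fun_prop)]
    exact norm_cfc_of_nonneg ha (zero_le_one.trans (le_max_left 1 δ⁻¹)) hsc
  have hn2 : ‖(1 + b) * Q‖ ≤ max 1 δ⁻¹ := by
    have h1b : (1 : A) + b = cfc (fun x : ℝ => 1 + x) b := by rw [cfc_affine hsb 1, one_smul]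
    rw [hQ, h1b, ← cfc_mul _ _ b (by fun_prop) (res_contOn hb hδ)]
    refine norm_cfc_of_nonneg hb (zero_le_one.trans (le_max_left 1 δ⁻¹)) fun x hx => ?_
    rw [mul_comm]
    exact hsc x hx
  have hmax0 : (0:ℝ) ≤ max 1 δ⁻¹ := le_trans zero_le_one (le_max_left _ _)
  calc ‖P - Q‖ = ‖(P * (1 + a)) * (RA - RB) * ((1 + b) * Q)‖ := by rw [hID]
  _ ≤ ‖(P * (1 + a)) * (RA - RB)‖ * ‖(1 + b) * Q‖ := norm_mul_le _ _
  _ ≤ ‖P * (1 + a)‖ * ‖RA - RB‖ * ‖(1 + b) * Q‖ := by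
      apply mul_le_mul_of_nonneg_right (norm_mul_le _ _) (norm_nonneg _)
  _ ≤ (max 1 δ⁻¹ * ‖RA - RB‖) * max 1 δ⁻¹ := by
      apply mul_le_mul (mul_le_mul_of_nonneg_right hn1 (norm_nonneg _)) hn2 (norm_nonneg _)
      positivity
  _ = max 1 δ⁻¹ ^ 2 * ‖RA - RB‖ := by ring

end OpAux

section FTC

variable {A : Type*} [CStarAlgebra A] [PartialOrder A] [StarOrderedRing A]

private lemma cont_exp_neg (a : A) : Continuous fun r : ℝ => exp ((-r) • a) := by
  letI : NormedAlgebra ℚ A := NormedAlgebra.restrictScalars ℚ ℝ A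
  exact exp_continuous.comp (continuous_neg.smul continuous_const)

private lemma cont_exp_sub (b : A) (u : ℝ) : Continuous fun r : ℝ => exp ((r - u) • b) := by
  letI : NormedAlgebra ℚ A := NormedAlgebra.restrictScalars ℚ ℝ A
  exact exp_continuous.comp ((continuous_id.sub continuous_const).smul continuous_const)

private lemma hasDerivAt_sandwich (a b M : A) (u s : ℝ) :
    HasDerivAt (fun r : ℝ => exp ((-r) • a) * M * exp ((r - u) • b))
      (-(a * exp ((-s) • a)) * M * exp ((s - u) • b)
        + exp ((-s) • a) * M * (b * exp ((s - u) • b))) s := by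
  have h1 : HasDerivAt (fun r : ℝ => exp ((-r) • a)) (-(a * exp ((-s) • a))) s := by
    have h := (hasDerivAt_exp_smul_const' (𝕂 := ℝ) a (-s)).scomp s (hasDerivAt_neg s)
    simpa [Function.comp_def] using h
  have h2 : HasDerivAt (fun r : ℝ => exp ((r - u) • b)) (b * exp ((s - u) • b)) s := by
    have h := (hasDerivAt_exp_smul_const' (𝕂 := ℝ) b (s - u)).scomp s
      ((hasDerivAt_id s).sub_const u)
    simpa [Function.comp_def] using h
  simpa [mul_assoc, Pi.mul_def] using (h1.mul_const M).mul h2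

private lemma sandwich_diff_le (a b M : A) (u : ℝ) {t₀ t₁ c : ℝ}
    (h01 : t₀ ≤ t₁) (hc : 0 ≤ c)
    (hbound : ∀ s ∈ Set.Ioc t₀ t₁,
      ‖-(a * exp ((-s) • a)) * M * exp ((s - u) • b)
        + exp ((-s) • a) * M * (b * exp ((s - u) • b))‖ ≤ c) :
    ‖exp ((-t₁) • a) * M * exp ((t₁ - u) • b)
      - exp ((-t₀) • a) * M * exp ((t₀ - u) • b)‖ ≤ c * (t₁ - t₀) := by
  set Ψ' : ℝ → A := fun s => -(a * exp ((-s) • a)) * M * exp ((s - u) • b)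
    + exp ((-s) • a) * M * (b * exp ((s - u) • b)) with hΨ'
  have hder : ∀ s ∈ Set.uIcc t₀ t₁,
      HasDerivAt (fun r : ℝ => exp ((-r) • a) * M * exp ((r - u) • b)) (Ψ' s) s :=
    fun s _ => hasDerivAt_sandwich a b M u s
  have hcont : Continuous Ψ' := by
    have c1 := cont_exp_neg a
    have c2 := cont_exp_sub b u
    exact (((continuous_const.mul c1).neg.mul continuous_const).mul c2).add
      ((c1.mul continuous_const).mul (continuous_const.mul c2))
  have hint := intervalIntegral.integral_eq_sub_of_hasDerivAt hder
    (hcont.intervalIntegrable t₀ t₁)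
  rw [← hint]
  have hb' : ∀ x ∈ Set.uIoc t₀ t₁, ‖Ψ' x‖ ≤ c := fun x hx =>
    hbound x (by rwa [Set.uIoc_of_le h01] at hx)
  calc ‖∫ s in t₀..t₁, Ψ' s‖ ≤ c * |t₁ - t₀| :=
        intervalIntegral.norm_integral_le_of_norm_le_const hb'
  _ = c * (t₁ - t₀) := by rw [abs_of_nonneg (by linarith)]

end FTC

section Main

variable {A : Type*} [CStarAlgebra A] [PartialOrder A] [StarOrderedRing A]

set_option maxHeartbeats 2000000 in
private lemma exp_diff_le {a b : A} (ha : 0 ≤ a) (hb : 0 ≤ b) {δ t : ℝ}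
    (hδ : 0 < δ) (ht : 0 < t) :
    ‖exp ((-t) • a) - exp ((-t) • b)‖
      ≤ 17 * max 1 δ⁻¹ ^ 2 * ‖Ring.inverse (1 + a : A) - Ring.inverse (1 + b : A)‖
          * Real.exp (δ * t) / t := by
  have hsa : IsSelfAdjoint a := IsSelfAdjoint.of_nonneg ha
  have hsb : IsSelfAdjoint b := IsSelfAdjoint.of_nonneg hb
  set P := cfc (fun x : ℝ => (δ + x)⁻¹) a with hP
  set Q := cfc (fun x : ℝ => (δ + x)⁻¹) b with hQ
  obtain ⟨hPl, hPr⟩ := res_mul_cancel ha hδ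
  obtain ⟨hQl, hQr⟩ := res_mul_cancel hb hδ
  set ε := ‖P - Q‖ with hε
  have hε0 : 0 ≤ ε := norm_nonneg _
  have hfree : ∀ d e : A, d * (P - Q) * e = (d * P) * e - d * (Q * e) := fun d e => by
    noncomm_ring
  have hassoc : ∀ x y z w : A, x * y * (z * w) = x * (y * z) * w := fun x y z w => by
    noncomm_ring
  have hassoc2 : ∀ x y z w : A, x * (y * z) * w = (x * y) * (z * w) := fun x y z w => by
    noncomm_ring
  -- commutation facts
  have hcomm_a : ∀ s : ℝ, a * exp ((-s) • a) = exp ((-s) • a) * a := by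
    intro s; rw [exp_cfc hsa s]
    exact (cfc_comm_self ha (by fun_prop)).symm
  have hQb : Q * b = b * Q := cfc_comm_self hb (res_contOn hb hδ)
  have hPa : P * a = a * P := cfc_comm_self ha (res_contOn ha hδ)
  have hcomm_Pa : ∀ s : ℝ, P * exp ((-s) • a) = exp ((-s) • a) * P := by
    intro s; rw [hP, exp_cfc hsa s]
    exact cfc_mul_comm' hsa (res_contOn ha hδ) (by fun_prop)
  have hcomm_Qb : ∀ s : ℝ, exp ((-s) • b) * Q = Q * exp ((-s) • b) := by
    intro s; rw [hQ, exp_cfc hsb s]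
    exact cfc_mul_comm' hsb (by fun_prop) (res_contOn hb hδ)
  -- the transfer identity
  have hba' : (δ • 1 + a) * (P - Q) * (δ • 1 + b) = b - a := by
    calc (δ • 1 + a) * (P - Q) * (δ • 1 + b)
        = ((δ • 1 + a) * P) * (δ • 1 + b) - (δ • 1 + a) * (Q * (δ • 1 + b)) :=
          hfree (δ • 1 + a) (δ • 1 + b)
    _ = (δ • 1 + b) - (δ • 1 + a) := by rw [hPl, hQr, one_mul, mul_one]
    _ = b - a := by abel
  have key1 : (δ • 1 + a) * (P - Q) = (b - a) * Q := by
    symm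
    calc (b - a) * Q = ((δ • 1 + a) * (P - Q) * (δ • 1 + b)) * Q := by rw [hba']
    _ = (δ • 1 + a) * (P - Q) := by
        rw [mul_assoc ((δ • 1 + a) * (P - Q)) (δ • 1 + b) Q, hQl, mul_one]
  have key2 : (P - Q) * (δ • 1 + b) = P * (b - a) := by
    symm
    calc P * (b - a) = P * ((δ • 1 + a) * ((P - Q) * (δ • 1 + b))) := by
          rw [← mul_assoc (δ • 1 + a), hba']
    _ = (P * (δ • 1 + a)) * ((P - Q) * (δ • 1 + b)) := by rw [← mul_assoc]
    _ = (P - Q) * (δ • 1 + b) := by rw [hPr, one_mul]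
  -- core two-sided estimate
  have hE : ∀ u : ℝ, 0 < u →
      ‖exp ((-u) • a) * Q - P * exp ((-u) • b)‖
        ≤ ε * (δ * u + 2 * (Real.exp 1)⁻¹ + 1) := by
    intro u hu
    have hu2 : 0 < u / 2 := by linarith
    set c := (δ + 2 * (Real.exp 1 * u)⁻¹) * ε with hc
    have hcoef0 : (0:ℝ) ≤ δ + 2 * (Real.exp 1 * u)⁻¹ := by positivity
    have hc0 : 0 ≤ c := mul_nonneg hcoef0 hε0
    have hmono : ∀ s : ℝ, u / 2 ≤ s → (Real.exp 1 * s)⁻¹ ≤ 2 * (Real.exp 1 * u)⁻¹ := by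
      intro s hs
      rw [show 2 * (Real.exp 1 * u)⁻¹ = (Real.exp 1 * (u / 2))⁻¹ by
        rw [mul_inv, mul_inv]; ring]
      apply inv_anti₀ (by positivity)
      exact mul_le_mul_of_nonneg_left hs (Real.exp_pos 1).le
    -- Ψ part (M = Q) on [u/2, u]
    have hbΨ : ∀ s ∈ Set.Ioc (u/2) u,
        ‖-(a * exp ((-s) • a)) * Q * exp ((s - u) • b)
          + exp ((-s) • a) * Q * (b * exp ((s - u) • b))‖ ≤ c := by
      intro s hs
      obtain ⟨hs1, hs2⟩ := hs
      have hs0 : 0 < s := lt_trans hu2 hs1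
      have hrw : -(a * exp ((-s) • a)) * Q * exp ((s - u) • b)
          + exp ((-s) • a) * Q * (b * exp ((s - u) • b))
          = (exp ((-s) • a) * (δ • 1 + a)) * (P - Q) * exp ((s - u) • b) := by
        rw [hcomm_a s, mul_assoc (exp ((-s) • a)) (δ • 1 + a) (P - Q), key1,
          sub_mul, ← hQb]
        noncomm_ring
      rw [hrw]
      have hEb1 : ‖exp ((s - u) • b)‖ ≤ 1 := by
        rw [show s - u = -(u - s) by ring]
        exact norm_exp_le_one' hb (by linarith)
      have hA1 : ‖exp ((-s) • a) * (δ • 1 + a)‖ ≤ δ + 2 * (Real.exp 1 * u)⁻¹ :=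
        (norm_exp_aff ha hδ hs0).trans (by linarith [hmono s hs1.le])
      calc ‖(exp ((-s) • a) * (δ • 1 + a)) * (P - Q) * exp ((s - u) • b)‖
          ≤ ‖(exp ((-s) • a) * (δ • 1 + a)) * (P - Q)‖ * ‖exp ((s - u) • b)‖ :=
            norm_mul_le _ _
      _ ≤ ‖exp ((-s) • a) * (δ • 1 + a)‖ * ‖P - Q‖ * ‖exp ((s - u) • b)‖ :=
            mul_le_mul_of_nonneg_right (norm_mul_le _ _) (norm_nonneg _)
      _ ≤ ((δ + 2 * (Real.exp 1 * u)⁻¹) * ε) * 1 := by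
            apply mul_le_mul _ hEb1 (norm_nonneg _) (mul_nonneg hcoef0 hε0)
            exact mul_le_mul hA1 le_rfl (norm_nonneg _) hcoef0
      _ = c := by rw [hc, mul_one]
    have hΨ := sandwich_diff_le a b Q u (by linarith : u/2 ≤ u) hc0 hbΨ
    -- Θ part (M = P) on [0, u/2]
    have hbΘ : ∀ s ∈ Set.Ioc (0:ℝ) (u/2),
        ‖-(a * exp ((-s) • a)) * P * exp ((s - u) • b)
          + exp ((-s) • a) * P * (b * exp ((s - u) • b))‖ ≤ c := by
      intro s hs
      obtain ⟨hs1, hs2⟩ := hs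
      have hus : 0 < u - s := by linarith
      have hrw : -(a * exp ((-s) • a)) * P * exp ((s - u) • b)
          + exp ((-s) • a) * P * (b * exp ((s - u) • b))
          = exp ((-s) • a) * (P - Q) * ((δ • 1 + b) * exp ((s - u) • b)) := by
        rw [hassoc (exp ((-s) • a)) (P - Q) (δ • 1 + b) (exp ((s - u) • b))]
        rw [key2, mul_sub, hPa, hcomm_a s]
        noncomm_ring
      rw [hrw]
      have hEa1 : ‖exp ((-s) • a)‖ ≤ 1 := norm_exp_le_one' ha hs1.le
      have hB1 : ‖(δ • 1 + b) * exp ((s - u) • b)‖ ≤ δ + 2 * (Real.exp 1 * u)⁻¹ := by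
        rw [show s - u = -(u - s) by ring]
        exact (norm_aff_exp hb hδ hus).trans (by linarith [hmono (u - s) (by linarith)])
      calc ‖exp ((-s) • a) * (P - Q) * ((δ • 1 + b) * exp ((s - u) • b))‖
          ≤ ‖exp ((-s) • a) * (P - Q)‖ * ‖(δ • 1 + b) * exp ((s - u) • b)‖ :=
            norm_mul_le _ _
      _ ≤ ‖exp ((-s) • a)‖ * ‖P - Q‖ * ‖(δ • 1 + b) * exp ((s - u) • b)‖ :=
            mul_le_mul_of_nonneg_right (norm_mul_le _ _) (norm_nonneg _)
      _ ≤ (1 * ε) * (δ + 2 * (Real.exp 1 * u)⁻¹) := by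
            apply mul_le_mul _ hB1 (norm_nonneg _) (mul_nonneg zero_le_one hε0)
            exact mul_le_mul hEa1 le_rfl (norm_nonneg _) zero_le_one
      _ = c := by rw [hc]; ring
    have hΘ := sandwich_diff_le a b P u (le_of_lt hu2) hc0 hbΘ
    -- simplify endpoints
    rw [sub_self, zero_smul, exp_zero, mul_one,
      show u/2 - u = -(u/2) by ring] at hΨ
    rw [neg_zero, zero_smul, exp_zero, one_mul, zero_sub,
      show u/2 - u = -(u/2) by ring, sub_zero] at hΘ
    -- middle term
    have hmid : ‖exp ((-(u/2)) • a) * Q * exp ((-(u/2)) • b)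
        - exp ((-(u/2)) • a) * P * exp ((-(u/2)) • b)‖ ≤ ε := by
      have hmeq : exp ((-(u/2)) • a) * Q * exp ((-(u/2)) • b)
          - exp ((-(u/2)) • a) * P * exp ((-(u/2)) • b)
          = exp ((-(u/2)) • a) * (Q - P) * exp ((-(u/2)) • b) := by noncomm_ring
      rw [hmeq]
      calc ‖exp ((-(u/2)) • a) * (Q - P) * exp ((-(u/2)) • b)‖
          ≤ ‖exp ((-(u/2)) • a) * (Q - P)‖ * ‖exp ((-(u/2)) • b)‖ := norm_mul_le _ _
      _ ≤ ‖exp ((-(u/2)) • a)‖ * ‖Q - P‖ * ‖exp ((-(u/2)) • b)‖ :=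
            mul_le_mul_of_nonneg_right (norm_mul_le _ _) (norm_nonneg _)
      _ ≤ 1 * ε * 1 := by
            rw [norm_sub_rev]
            apply mul_le_mul _ (norm_exp_le_one' hb hu2.le) (norm_nonneg _)
              (mul_nonneg zero_le_one hε0)
            exact mul_le_mul (norm_exp_le_one' ha hu2.le) le_rfl (norm_nonneg _) zero_le_one
      _ = ε := by ring
    have hsum : exp ((-u) • a) * Q - P * exp ((-u) • b)
        = (exp ((-u) • a) * Q
            - exp ((-(u/2)) • a) * Q * exp ((-(u/2)) • b))
          + (exp ((-(u/2)) • a) * P * exp ((-(u/2)) • b) - P * exp ((-u) • b))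
          + (exp ((-(u/2)) • a) * Q * exp ((-(u/2)) • b)
            - exp ((-(u/2)) • a) * P * exp ((-(u/2)) • b)) := by abel
    have he1 : Real.exp 1 ≠ 0 := ne_of_gt (Real.exp_pos 1)
    calc ‖exp ((-u) • a) * Q - P * exp ((-u) • b)‖
        ≤ ‖exp ((-u) • a) * Q - exp ((-(u/2)) • a) * Q * exp ((-(u/2)) • b)‖
          + ‖exp ((-(u/2)) • a) * P * exp ((-(u/2)) • b) - P * exp ((-u) • b)‖
          + ‖exp ((-(u/2)) • a) * Q * exp ((-(u/2)) • b)
            - exp ((-(u/2)) • a) * P * exp ((-(u/2)) • b)‖ := by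
          rw [hsum]; exact norm_add₃_le
    _ ≤ c * (u - u/2) + c * (u/2) + ε := add_le_add (add_le_add hΨ hΘ) hmid
    _ = ε * (δ * u + 2 * (Real.exp 1)⁻¹ + 1) := by
          rw [hc]
          have hu0 : u ≠ 0 := ne_of_gt hu
          field_simp
          ring
  -- one-sided smoothing removal
  have hPD : ∀ u : ℝ, 0 < u →
      ‖P * (exp ((-u) • a) - exp ((-u) • b))‖
        ≤ ε * (δ * u + 2 * (Real.exp 1)⁻¹ + 2) := by
    intro u hu
    have hidP : P * (exp ((-u) • a) - exp ((-u) • b))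
        = exp ((-u) • a) * (P - Q)
          + (exp ((-u) • a) * Q - P * exp ((-u) • b)) := by
      rw [mul_sub, hcomm_Pa u]; noncomm_ring
    rw [hidP]
    calc ‖exp ((-u) • a) * (P - Q)
          + (exp ((-u) • a) * Q - P * exp ((-u) • b))‖
        ≤ ‖exp ((-u) • a) * (P - Q)‖
          + ‖exp ((-u) • a) * Q - P * exp ((-u) • b)‖ := norm_add_le _ _
    _ ≤ 1 * ε + ε * (δ * u + 2 * (Real.exp 1)⁻¹ + 1) := by
          apply add_le_add _ (hE u hu)
          calc ‖exp ((-u) • a) * (P - Q)‖ ≤ ‖exp ((-u) • a)‖ * ‖P - Q‖ := norm_mul_le _ _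
          _ ≤ 1 * ε := mul_le_mul (norm_exp_le_one' ha hu.le) le_rfl (norm_nonneg _) zero_le_one
    _ = ε * (δ * u + 2 * (Real.exp 1)⁻¹ + 2) := by ring
  have hDQ : ∀ u : ℝ, 0 < u →
      ‖(exp ((-u) • a) - exp ((-u) • b)) * Q‖
        ≤ ε * (δ * u + 2 * (Real.exp 1)⁻¹ + 2) := by
    intro u hu
    have hidQ : (exp ((-u) • a) - exp ((-u) • b)) * Q
        = (exp ((-u) • a) * Q - P * exp ((-u) • b))
          + (P - Q) * exp ((-u) • b) := by
      rw [sub_mul, hcomm_Qb u]; noncomm_ring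
    rw [hidQ]
    calc ‖(exp ((-u) • a) * Q - P * exp ((-u) • b))
          + (P - Q) * exp ((-u) • b)‖
        ≤ ‖exp ((-u) • a) * Q - P * exp ((-u) • b)‖
          + ‖(P - Q) * exp ((-u) • b)‖ := norm_add_le _ _
    _ ≤ ε * (δ * u + 2 * (Real.exp 1)⁻¹ + 1) + ε * 1 := by
          apply add_le_add (hE u hu)
          calc ‖(P - Q) * exp ((-u) • b)‖ ≤ ‖P - Q‖ * ‖exp ((-u) • b)‖ := norm_mul_le _ _
          _ ≤ ε * 1 := mul_le_mul le_rfl (norm_exp_le_one' hb hu.le) (norm_nonneg _) hε0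
    _ = ε * (δ * u + 2 * (Real.exp 1)⁻¹ + 2) := by ring
  -- final splitting
  have ht2 : 0 < t / 2 := half_pos ht
  have hhalf : (-(t/2) : ℝ) + (-(t/2)) = -t := by ring
  have hsplit_a : exp ((-t) • a) = exp ((-(t/2)) • a) * exp ((-(t/2)) • a) := by
    calc exp ((-t) • a) = exp (((-(t/2)) + (-(t/2))) • a) := by rw [hhalf]
    _ = exp ((-(t/2)) • a + (-(t/2)) • a) := by rw [add_smul]
    _ = _ := by
      letI : NormedAlgebra ℚ A := NormedAlgebra.restrictScalars ℚ ℝ A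
      exact exp_add_of_commute (Commute.refl _)
  have hsplit_b : exp ((-t) • b) = exp ((-(t/2)) • b) * exp ((-(t/2)) • b) := by
    calc exp ((-t) • b) = exp (((-(t/2)) + (-(t/2))) • b) := by rw [hhalf]
    _ = exp ((-(t/2)) • b + (-(t/2)) • b) := by rw [add_smul]
    _ = _ := by
      letI : NormedAlgebra ℚ A := NormedAlgebra.restrictScalars ℚ ℝ A
      exact exp_add_of_commute (Commute.refl _)
  have hid : exp ((-t) • a) - exp ((-t) • b)
      = (exp ((-(t/2)) • a) * (δ • 1 + a))
          * (P * (exp ((-(t/2)) • a) - exp ((-(t/2)) • b)))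
        + ((exp ((-(t/2)) • a) - exp ((-(t/2)) • b)) * Q)
          * ((δ • 1 + b) * exp ((-(t/2)) • b)) := by
    rw [hsplit_a, hsplit_b]
    calc exp ((-(t/2)) • a) * exp ((-(t/2)) • a)
          - exp ((-(t/2)) • b) * exp ((-(t/2)) • b)
        = exp ((-(t/2)) • a) * ((δ • 1 + a) * P)
            * (exp ((-(t/2)) • a) - exp ((-(t/2)) • b))
          + (exp ((-(t/2)) • a) - exp ((-(t/2)) • b)) * (Q * (δ • 1 + b))
            * exp ((-(t/2)) • b) := by rw [hPl, hQr]; noncomm_ring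
    _ = _ := by rw [hassoc2, hassoc2]
  have hn3 := hPD (t/2) ht2
  have hn4 := hDQ (t/2) ht2
  have hn1 : ‖exp ((-(t/2)) • a) * (δ • 1 + a)‖ ≤ δ + (Real.exp 1 * (t/2))⁻¹ :=
    norm_exp_aff ha hδ ht2
  have hn2 : ‖(δ • 1 + b) * exp ((-(t/2)) • b)‖ ≤ δ + (Real.exp 1 * (t/2))⁻¹ :=
    norm_aff_exp hb hδ ht2
  have hcoef : (0:ℝ) ≤ δ + (Real.exp 1 * (t/2))⁻¹ := by positivity
  have hterm : (0:ℝ) ≤ ε * (δ * (t/2) + 2 * (Real.exp 1)⁻¹ + 2) :=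
    mul_nonneg hε0 (by positivity)
  have hDbound : ‖exp ((-t) • a) - exp ((-t) • b)‖
      ≤ ε * (2 * (δ + (Real.exp 1 * (t/2))⁻¹) * (δ * (t/2) + 2 * (Real.exp 1)⁻¹ + 2)) := by
    rw [hid]
    calc ‖(exp ((-(t/2)) • a) * (δ • 1 + a))
          * (P * (exp ((-(t/2)) • a) - exp ((-(t/2)) • b)))
        + ((exp ((-(t/2)) • a) - exp ((-(t/2)) • b)) * Q)
          * ((δ • 1 + b) * exp ((-(t/2)) • b))‖
        ≤ ‖exp ((-(t/2)) • a) * (δ • 1 + a)‖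
            * ‖P * (exp ((-(t/2)) • a) - exp ((-(t/2)) • b))‖
          + ‖(exp ((-(t/2)) • a) - exp ((-(t/2)) • b)) * Q‖
            * ‖(δ • 1 + b) * exp ((-(t/2)) • b)‖ :=
          (norm_add_le _ _).trans (add_le_add (norm_mul_le _ _) (norm_mul_le _ _))
    _ ≤ (δ + (Real.exp 1 * (t/2))⁻¹) * (ε * (δ * (t/2) + 2 * (Real.exp 1)⁻¹ + 2))
          + (ε * (δ * (t/2) + 2 * (Real.exp 1)⁻¹ + 2)) * (δ + (Real.exp 1 * (t/2))⁻¹) := by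
          apply add_le_add
          · exact mul_le_mul hn1 hn3 (norm_nonneg _) hcoef
          · exact mul_le_mul hn4 hn2 (norm_nonneg _) hterm
    _ = ε * (2 * (δ + (Real.exp 1 * (t/2))⁻¹) * (δ * (t/2) + 2 * (Real.exp 1)⁻¹ + 2)) := by
          ring
  -- scalar estimate
  have hS : 2 * (δ + (Real.exp 1 * (t/2))⁻¹) * (δ * (t/2) + 2 * (Real.exp 1)⁻¹ + 2)
      ≤ 17 * Real.exp (δ * t) / t := by
    have he2 : (2:ℝ) ≤ Real.exp 1 := by have := Real.add_one_le_exp 1; linarith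
    have hEt : (Real.exp 1 * (t/2))⁻¹ ≤ t⁻¹ := by
      apply inv_anti₀ ht
      nlinarith
    have h2e : 2 * (Real.exp 1)⁻¹ ≤ 1 := by
      rw [← div_eq_mul_inv, div_le_one (Real.exp_pos 1)]; exact he2
    have step : 2 * (δ + (Real.exp 1 * (t/2))⁻¹) * (δ * (t/2) + 2 * (Real.exp 1)⁻¹ + 2)
        ≤ 2 * (δ + t⁻¹) * (δ * (t/2) + 3) := by
      apply mul_le_mul
      · have : δ + (Real.exp 1 * (t/2))⁻¹ ≤ δ + t⁻¹ := by linarith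
        linarith
      · linarith
      · positivity
      · positivity
    refine step.trans ?_
    rw [le_div_iff₀ ht]
    have hq : 1 + δ * t / 2 ≤ Real.exp (δ * t / 2) := by
      have := Real.add_one_le_exp (δ * t / 2); linarith
    have hsq : Real.exp (δ * t) = Real.exp (δ * t / 2) * Real.exp (δ * t / 2) := by
      rw [← Real.exp_add]; ring_nf
    have h2 : (1 + δ * t / 2) * (1 + δ * t / 2)
        ≤ Real.exp (δ * t / 2) * Real.exp (δ * t / 2) :=
      mul_self_le_mul_self (by positivity) hq
    have h6 : 2 * (δ + t⁻¹) * (δ * (t/2) + 3) * t = δ^2 * t^2 + 7 * (δ * t) + 6 := by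
      have ht0 : t ≠ 0 := ne_of_gt ht
      field_simp
      ring
    rw [h6, hsq]
    nlinarith [h2, mul_pos hδ ht]
  -- conclude
  have hεres := res_diff_norm_le ha hb hδ
  have hc2 : (0:ℝ) ≤ max 1 δ⁻¹ ^ 2 := by positivity
  have hfinpos : (0:ℝ) ≤ 17 * Real.exp (δ * t) / t := by positivity
  calc ‖exp ((-t) • a) - exp ((-t) • b)‖
      ≤ ε * (2 * (δ + (Real.exp 1 * (t/2))⁻¹) * (δ * (t/2) + 2 * (Real.exp 1)⁻¹ + 2)) :=
        hDbound
  _ ≤ (max 1 δ⁻¹ ^ 2 * ‖Ring.inverse (1 + a : A) - Ring.inverse (1 + b : A)‖)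
        * (17 * Real.exp (δ * t) / t) := by
      apply mul_le_mul hεres hS _ (mul_nonneg hc2 (norm_nonneg _))
      positivity
  _ = 17 * max 1 δ⁻¹ ^ 2 * ‖Ring.inverse (1 + a : A) - Ring.inverse (1 + b : A)‖
        * Real.exp (δ * t) / t := by
      rw [div_eq_mul_inv, div_eq_mul_inv]; ring

end Main

section Pow

variable {A : Type*} [CStarAlgebra A] [PartialOrder A] [StarOrderedRing A]

private lemma chernoff_pow {f : A} (hf0 : 0 ≤ f) (hf1 : f ≤ 1) {n : ℕ} (hn : 1 ≤ n) :
    ‖f ^ n - exp ((-(n:ℝ)) • (1 - f))‖ ≤ 16 / n := by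
  have hsf : IsSelfAdjoint f := IsSelfAdjoint.of_nonneg hf0
  have h1f : (0:A) ≤ 1 - f := sub_nonneg.2 hf1
  have hone : cfc (fun y : ℝ => 1 - y) f = 1 - f := by
    rw [cfc_sub (fun _ : ℝ => (1:ℝ)) (fun y : ℝ => y) f (by fun_prop) (by fun_prop),
      cfc_const 1 f hsf, map_one, cfc_id' ℝ f hsf]
  have hspec : ∀ x ∈ spectrum ℝ f, 0 ≤ x ∧ x ≤ 1 := by
    intro x hx
    refine ⟨spectrum_nonneg_of_nonneg hf0 hx, ?_⟩
    have himg : spectrum ℝ (cfc (fun y : ℝ => 1 - y) f)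
        = (fun y : ℝ => 1 - y) '' spectrum ℝ f := cfc_map_spectrum _ f hsf (by fun_prop)
    have hmem : (1 : ℝ) - x ∈ spectrum ℝ (1 - f) := by
      rw [← hone, himg]; exact ⟨x, hx, rfl⟩
    have := spectrum_nonneg_of_nonneg h1f hmem
    linarith
  have hexp : exp ((-(n:ℝ)) • (1 - f))
      = cfc (fun x : ℝ => Real.exp (-((n:ℝ) * (1 - x)))) f := by
    rw [← hone, exp_cfc (IsSelfAdjoint.of_nonneg (hone ▸ h1f)) (n:ℝ),
      ← cfc_comp (fun y : ℝ => Real.exp (-((n:ℝ) * y))) (fun y : ℝ => 1 - y) f hsf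
        (by fun_prop) (by fun_prop)]
    rfl
  have hpow : f ^ n = cfc (fun x : ℝ => x ^ n) f := (cfc_pow_id f n hsf).symm
  rw [hpow, hexp, ← cfc_sub _ _ f (by fun_prop) (by fun_prop)]
  have hc : (0:ℝ) ≤ 16 / n := by positivity
  refine norm_cfc_le hc fun x hx => ?_
  obtain ⟨h0, h1⟩ := hspec x hx
  rw [Real.norm_eq_abs]
  exact chernoff_scalar hn h0 h1

end Pow

set_option maxHeartbeats 1000000
set_option synthInstance.maxHeartbeats 400000

/-- Norm version of Chernoff's theorem with error bound, Part I (bounded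
generator): if `0 ≤ F(t) ≤ 1` are selfadjoint for `t ∈ (0,T]`, `H ≥ 0` is a
bounded selfadjoint operator, `S_t = t⁻¹(1 − F(t))`, and
`‖(1+S_t)⁻¹ − (1+H)⁻¹‖ ≤ K·t^α` on `(0,T]` for some `0 < α ≤ 1`, then for every
`δ > 0` there is `C > 0` with
`‖F(t/n)^n − e^{−tH}‖ ≤ C·δ⁻²·t^{α−1}·e^{δt}·n^{−α}` whenever `t/n ∈ (0,T]`. -/
theorem chernoff_norm_error_bound_I {ℋ : Type*} [NormedAddCommGroup ℋ]
    [InnerProductSpace ℂ ℋ] [CompleteSpace ℋ]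
    (H : ℋ →L[ℂ] ℋ) (hH : H.IsPositive)
    (T : ℝ) (hT : 0 < T) (F : ℝ → (ℋ →L[ℂ] ℋ))
    (hFpos : ∀ t ∈ Set.Ioc (0 : ℝ) T, (F t).IsPositive)
    (hFle : ∀ t ∈ Set.Ioc (0 : ℝ) T, (1 - F t).IsPositive)
    (hSinv : ∀ t ∈ Set.Ioc (0 : ℝ) T, IsUnit (1 + ((t : ℂ))⁻¹ • (1 - F t)))
    (hHinv : IsUnit (1 + H))
    (α K : ℝ) (hα0 : 0 < α) (hα1 : α ≤ 1) (hK : 0 < K)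
    (hres : ∀ t ∈ Set.Ioc (0 : ℝ) T,
      ‖Ring.inverse (1 + ((t : ℂ))⁻¹ • (1 - F t)) - Ring.inverse (1 + H)‖ ≤ K * t ^ α) :
    ∀ δ : ℝ, 0 < δ → ∃ C : ℝ, 0 < C ∧ ∀ t : ℝ, 0 < t → ∀ n : ℕ, 1 ≤ n →
      t / n ∈ Set.Ioc (0 : ℝ) T →
        ‖(F (t / n)) ^ n - exp ((-(t : ℂ)) • H)‖
          ≤ C / δ ^ 2 * t ^ (α - 1) * Real.exp (δ * t) / (n : ℝ) ^ α := by
  intro δ hδ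
  set M : ℝ := max 1 (T ^ (1 - α)) with hM
  have hM1 : (1:ℝ) ≤ M := le_max_left _ _
  refine ⟨δ ^ 2 * (16 * M + 17 * max 1 δ⁻¹ ^ 2 * K), by positivity, ?_⟩
  intro t ht n hn hmem
  obtain ⟨hτ0, hτT⟩ := hmem
  have hn0 : 0 < n := hn
  have hn0' : (0:ℝ) < (n:ℝ) := by exact_mod_cast hn0
  -- positivity facts
  have h0F1 : (0 : ℋ →L[ℂ] ℋ) ≤ 1 - F (t/n) :=
    (ContinuousLinearMap.nonneg_iff_isPositive _).2 (hFle (t/n) ⟨hτ0, hτT⟩)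
  have h0F : (0 : ℋ →L[ℂ] ℋ) ≤ F (t/n) :=
    (ContinuousLinearMap.nonneg_iff_isPositive _).2 (hFpos (t/n) ⟨hτ0, hτT⟩)
  have hF1 : F (t/n) ≤ 1 := sub_nonneg.1 h0F1
  have h0H : (0 : ℋ →L[ℂ] ℋ) ≤ H := (ContinuousLinearMap.nonneg_iff_isPositive _).2 hH
  set S : ℋ →L[ℂ] ℋ := (t/n)⁻¹ • (1 - F (t/n)) with hS
  have hS0 : (0 : ℋ →L[ℂ] ℋ) ≤ S := smul_nonneg (inv_nonneg.2 hτ0.le) h0F1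
  have hSc : (((t/n : ℝ) : ℂ))⁻¹ • (1 - F (t/n)) = S := by
    rw [hS, ← Complex.ofReal_inv, Complex.coe_smul]
  -- exp rewritings
  have hexpC : exp ((-(t:ℂ)) • H) = exp ((-t) • H) := by
    rw [show (-(t:ℂ)) = ((-t : ℝ) : ℂ) by push_cast; ring, Complex.coe_smul]
  have hsmul_eq : (-t) • S = (-(n:ℝ)) • (1 - F (t/n)) := by
    rw [hS, smul_smul]
    congr 1
    rw [inv_div]
    field_simp
  -- the two bounds
  have hb1 : ‖F (t/n) ^ n - exp ((-t) • S)‖ ≤ 16 / n := by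
    rw [hsmul_eq]
    exact chernoff_pow h0F hF1 hn
  have hres' : ‖Ring.inverse (1 + S) - Ring.inverse (1 + H)‖ ≤ K * (t/n) ^ α := by
    have h := hres (t/n) ⟨hτ0, hτT⟩
    rwa [hSc] at h
  have hb2 : ‖exp ((-t) • S) - exp ((-t) • H)‖
      ≤ 17 * max 1 δ⁻¹ ^ 2 * (K * (t/n) ^ α) * Real.exp (δ * t) / t := by
    refine (exp_diff_le hS0 h0H hδ ht).trans ?_
    have h17 := hres'
    gcongr
  have htri : ‖F (t/n) ^ n - exp ((-(t:ℂ)) • H)‖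
      ≤ 16 / n + 17 * max 1 δ⁻¹ ^ 2 * (K * (t/n) ^ α) * Real.exp (δ * t) / t := by
    rw [hexpC]
    calc ‖F (t/n) ^ n - exp ((-t) • H)‖
        ≤ ‖F (t/n) ^ n - exp ((-t) • S)‖ + ‖exp ((-t) • S) - exp ((-t) • H)‖ := by
          simpa [dist_eq_norm] using
            dist_triangle (F (t/n) ^ n) (exp ((-t) • S)) (exp ((-t) • H))
    _ ≤ _ := add_le_add hb1 hb2
  refine htri.trans ?_
  -- final scalar comparison
  have hE1 : (1:ℝ) ≤ Real.exp (δ * t) := Real.one_le_exp (by positivity)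
  have hτα : (0:ℝ) < (t/n) ^ α := Real.rpow_pos_of_pos hτ0 α
  have hτM : t/n ≤ M * (t/n) ^ α := by
    have hτsplit : t/n = (t/n) ^ α * (t/n) ^ (1 - α) := by
      rw [← Real.rpow_add hτ0, show α + (1 - α) = 1 by ring, Real.rpow_one]
    have hτT' : (t/n) ^ (1 - α) ≤ T ^ (1 - α) :=
      Real.rpow_le_rpow hτ0.le hτT (by linarith)
    calc t/n = (t/n) ^ α * (t/n) ^ (1 - α) := hτsplit
    _ ≤ (t/n) ^ α * M := by
        apply mul_le_mul_of_nonneg_left (hτT'.trans (le_max_right _ _)) hτα.le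
    _ = M * (t/n) ^ α := by ring
  have hpart1 : (16:ℝ) / n ≤ 16 * M * ((t/n) ^ α * Real.exp (δ * t) / t) := by
    have h1 : (16:ℝ) / n = 16 * (t/n) / t := by field_simp
    rw [h1]
    calc (16:ℝ) * (t/n) / t ≤ 16 * (M * (t/n) ^ α) / t := by gcongr
    _ = 16 * M * ((t/n) ^ α / t) := by ring
    _ ≤ 16 * M * ((t/n) ^ α * Real.exp (δ * t) / t) := by
        apply mul_le_mul_of_nonneg_left _ (by positivity)
        rw [div_le_div_iff₀ ht ht]
        calc (t/n) ^ α * t ≤ ((t/n) ^ α * Real.exp (δ * t)) * t := by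
              apply mul_le_mul_of_nonneg_right _ ht.le
              exact le_mul_of_one_le_right hτα.le hE1
        _ = (t/n) ^ α * Real.exp (δ * t) * t := by ring
  have hpart2 : 17 * max 1 δ⁻¹ ^ 2 * (K * (t/n) ^ α) * Real.exp (δ * t) / t
      = 17 * max 1 δ⁻¹ ^ 2 * K * ((t/n) ^ α * Real.exp (δ * t) / t) := by
    ring
  have hgoal : δ ^ 2 * (16 * M + 17 * max 1 δ⁻¹ ^ 2 * K) / δ ^ 2 * t ^ (α - 1)
        * Real.exp (δ * t) / (n : ℝ) ^ α
      = (16 * M + 17 * max 1 δ⁻¹ ^ 2 * K) * ((t/n) ^ α * Real.exp (δ * t) / t) := by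
    have hd2 : δ ^ 2 * (16 * M + 17 * max 1 δ⁻¹ ^ 2 * K) / δ ^ 2
        = 16 * M + 17 * max 1 δ⁻¹ ^ 2 * K :=
      mul_div_cancel_left₀ _ (pow_ne_zero 2 (ne_of_gt hδ))
    rw [hd2, Real.div_rpow ht.le (Nat.cast_nonneg n), Real.rpow_sub ht, Real.rpow_one]
    have hnα : (0:ℝ) < (n:ℝ) ^ α := Real.rpow_pos_of_pos hn0' α
    field_simp
  rw [hgoal]
  calc 16 / (n:ℝ) + 17 * max 1 δ⁻¹ ^ 2 * (K * (t/n) ^ α) * Real.exp (δ * t) / t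
      ≤ 16 * M * ((t/n) ^ α * Real.exp (δ * t) / t)
        + 17 * max 1 δ⁻¹ ^ 2 * K * ((t/n) ^ α * Real.exp (δ * t) / t) := by
        rw [hpart2] at *
        exact add_le_add hpart1 le_rfl
  _ = (16 * M + 17 * max 1 δ⁻¹ ^ 2 * K) * ((t/n) ^ α * Real.exp (δ * t) / t) := by ring
end
end
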